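/- arXiv:2602.22893 — 5 statements merged into one kernel-verified Lean document; each statement's English description precedes it below -/
import Mathlib

section
/- Let ρ be a quantum state on a d-dimensional Hilbert space with Hamiltonian H, let P = {P_i}_{i=1}^d be a fine-grained measurement, and let Q = {Q_i}_{i=1}^n be the coarse-grained measurement obtained from P by classical post-processing via a column-stochastic matrix D, i.e. Q_i = Σ_j D_{ij} P_j, where every Q_i is nonzero. Then the observational ergotropy satisfies R(ρ, P) ≥ R(ρ, Q). -/
open Matrix ComplexOrder

/-- Passive energy of a state `σ` w.r.t. the Hamiltonian `H`:
the infimum over all unitaries `U` of `Tr (H U σ U†)`. -/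
noncomputable def Epass {d : ℕ} (H σ : Matrix (Fin d) (Fin d) ℂ) : ℝ :=
  ⨅ U : Matrix.unitaryGroup (Fin d) ℂ,
    ((H * ((U : Matrix (Fin d) (Fin d) ℂ) * σ * ((U : Matrix (Fin d) (Fin d) ℂ))ᴴ)).trace).re

/-- Coarse-grained state `ρ_cg^M = ∑ i, Tr(ρ M i) • M i / Tr(M i)`. -/
noncomputable def cgState {d n : ℕ} (ρ : Matrix (Fin d) (Fin d) ℂ)
    (M : Fin n → Matrix (Fin d) (Fin d) ℂ) : Matrix (Fin d) (Fin d) ℂ :=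
  ∑ i, (((ρ * M i).trace) / ((M i).trace)) • M i

/-- Observational ergotropy `R(ρ, M) = Tr(H ρ) - Epass(ρ_cg^M)`. -/
noncomputable def obsErg {d n : ℕ} (ρ H : Matrix (Fin d) (Fin d) ℂ)
    (M : Fin n → Matrix (Fin d) (Fin d) ℂ) : ℝ :=
  ((H * ρ).trace).re - Epass H (cgState ρ M)

/-- A fine-grained measurement: a family of rank-one mutually orthogonal
(Hermitian) projectors summing to the identity. -/
def FineGrained {d : ℕ} (P : Fin d → Matrix (Fin d) (Fin d) ℂ) : Prop :=
  (∀ i, (P i).IsHermitian) ∧ (∀ i j, P i * P j = if i = j then P i else 0) ∧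
    (∑ i, P i = 1) ∧ (∀ i, (P i).rank = 1)

/-- A column-stochastic matrix: nonnegative entries, every column sums to 1. -/
def ColStochastic {n d : ℕ} (D : Matrix (Fin n) (Fin d) ℝ) : Prop :=
  (∀ i j, 0 ≤ D i j) ∧ ∀ j, ∑ i, D i j = 1

/-- A doubly stochastic matrix: nonnegative entries, all row and column sums are 1. -/
def DoublyStochastic {d : ℕ} (B : Matrix (Fin d) (Fin d) ℝ) : Prop :=
  (∀ i j, 0 ≤ B i j) ∧ (∀ i, ∑ j, B i j = 1) ∧ (∀ j, ∑ i, B i j = 1)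

/-- The entries of `x` rearranged in non-increasing order. -/
noncomputable def descSort {d : ℕ} (x : Fin d → ℝ) : Fin d → ℝ :=
  fun i => x (Tuple.sort x i.rev)

/-- `Majorized x y` (`x ≺ y`): for every `k` the sum of the `k` largest entries
of `x` is at most that of `y`, with equal total sums. -/
def Majorized {d : ℕ} (x y : Fin d → ℝ) : Prop :=
  (∀ k : ℕ, (∑ i : Fin d, if (i : ℕ) < k then descSort x i else 0) ≤
      ∑ i : Fin d, if (i : ℕ) < k then descSort y i else 0) ∧
    (∑ i, x i = ∑ i, y i)

/-- The rank-one projector `|v⟩⟨v|`. -/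
noncomputable def projVec {d : ℕ} (v : Fin d → ℂ) : Matrix (Fin d) (Fin d) ℂ :=
  Matrix.vecMulVec v (star v)

/-- `v` is an orthonormal family: `⟨v i, v j⟩ = δ_{ij}`. -/
def IsONB {d : ℕ} (v : Fin d → (Fin d → ℂ)) : Prop :=
  ∀ i j, star (v i) ⬝ᵥ v j = if i = j then 1 else 0

/-- The dephasing `Δ_ρ = ∑ j ⟨E_j|ρ|E_j⟩ |E_j⟩⟨E_j|` of `ρ` in the basis `v`. -/
noncomputable def dephase {d : ℕ} (ρ : Matrix (Fin d) (Fin d) ℂ)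
    (v : Fin d → (Fin d → ℂ)) : Matrix (Fin d) (Fin d) ℂ :=
  ∑ j, (star (v j) ⬝ᵥ (ρ *ᵥ v j)) • projVec (v j)

/-- Incoherent ergotropy `R_incoherent(ρ) = Tr(H Δ_ρ) - Epass(Δ_ρ)`. -/
noncomputable def Rincoherent {d : ℕ} (ρ H : Matrix (Fin d) (Fin d) ℂ)
    (v : Fin d → (Fin d → ℂ)) : ℝ :=
  ((H * dephase ρ v).trace).re - Epass H (dephase ρ v)

/-! ### Auxiliary lemmas -/

lemma aux_vmv_mul {d : ℕ} (a b c e : Fin d → ℂ) :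
    vecMulVec a b * vecMulVec c e = (b ⬝ᵥ c) • vecMulVec a e := by
  ext i j
  simp only [mul_apply, vecMulVec_apply, Matrix.smul_apply, dotProduct, smul_eq_mul]
  rw [Finset.sum_mul]
  exact Finset.sum_congr rfl fun k _ => by ring

lemma aux_vmv_conjT {d : ℕ} (a b : Fin d → ℂ) :
    (vecMulVec a b)ᴴ = vecMulVec (star b) (star a) := by
  ext i j
  simp [conjTranspose_apply, vecMulVec_apply, mul_comm]

lemma aux_trace_vmv {d : ℕ} (a b : Fin d → ℂ) : (vecMulVec a b).trace = a ⬝ᵥ b := by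
  simp [trace, Matrix.diag, vecMulVec_apply, dotProduct]

lemma aux_trace_mul_proj {d : ℕ} (ρ : Matrix (Fin d) (Fin d) ℂ) (w : Fin d → ℂ) :
    (ρ * projVec w).trace = star w ⬝ᵥ (ρ *ᵥ w) := by
  simp only [projVec, trace, Matrix.diag, mul_apply, vecMulVec_apply, dotProduct, mulVec,
    Pi.star_apply]
  refine Finset.sum_congr rfl fun i _ => ?_
  rw [Finset.mul_sum]
  exact Finset.sum_congr rfl fun j _ => by ring

lemma aux_minor {d : ℕ} {A : Matrix (Fin d) (Fin d) ℂ} (h : A.rank = 1) :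
    ∀ i j k l, A i j * A k l = A i l * A k j := by
  have h' : Module.finrank ℂ (LinearMap.range A.mulVecLin) = 1 := h
  rw [finrank_eq_one_iff'] at h'
  obtain ⟨⟨u, hu⟩, _, hspan⟩ := h'
  have hcol : ∀ j : Fin d, ∃ c : ℂ, ∀ i, A i j = c * u i := by
    intro j
    have hmem : (fun i => A i j) ∈ LinearMap.range A.mulVecLin :=
      ⟨Pi.single j 1, by ext i; simp [mulVecLin_apply]⟩
    obtain ⟨c, hc⟩ := hspan ⟨_, hmem⟩
    refine ⟨c, fun i => ?_⟩
    have h2 : c • u = fun i => A i j := congrArg Subtype.val hc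
    exact (congrFun h2 i).symm
  choose c hc using hcol
  intro i j k l
  simp only [hc]
  ring

lemma aux_proj_eq {d : ℕ} {A : Matrix (Fin d) (Fin d) ℂ} (hherm : A.IsHermitian)
    (hidem : A * A = A) (hrank : A.rank = 1) :
    ∃ w : Fin d → ℂ, A = projVec w ∧ w ≠ 0 := by
  have hA0 : A ≠ 0 := by
    rintro rfl
    simp at hrank
  obtain ⟨a, b, hab⟩ : ∃ a b, A a b ≠ 0 := by
    by_contra hcon
    push_neg at hcon
    exact hA0 (by ext i j; simpa using hcon i j)
  have hminor := aux_minor hrank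
  have haa : A a a ≠ 0 := by
    intro h0
    have h1 : A a a * A b b = A a b * A b a := hminor a a b b
    have h2 : A b a = star (A a b) := (hherm.apply b a).symm
    rw [h0, zero_mul, h2] at h1
    have := mul_ne_zero hab (star_ne_zero.mpr hab)
    exact this h1.symm
  -- A a a equals the sum of |A j a|², a positive real
  have hsum : A a a = ((∑ j, Complex.normSq (A j a) : ℝ) : ℂ) := by
    conv_lhs => rw [← hidem]
    rw [mul_apply]
    push_cast
    refine Finset.sum_congr rfl fun j _ => ?_
    rw [← hherm.apply a j, Complex.star_def, Complex.normSq_eq_conj_mul_self]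
  set s : ℝ := ∑ j, Complex.normSq (A j a) with hs
  have hs0 : 0 < s := by
    rcases (Finset.sum_nonneg fun j _ => Complex.normSq_nonneg (A j a)).lt_or_eq with h | h
    · exact h
    · exact absurd (hsum.trans (by rw [hs, ← h]; norm_num)) haa
  set r : ℝ := Real.sqrt s with hr
  have hr0 : 0 < r := Real.sqrt_pos.mpr hs0
  have hrr : (r : ℂ) * (r : ℂ) = (s : ℂ) := by
    rw [← Complex.ofReal_mul, Real.mul_self_sqrt hs0.le]
  refine ⟨fun i => A i a / (r : ℂ), ?_, ?_⟩
  · ext i j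
    simp only [projVec, vecMulVec_apply, Pi.star_apply]
    have hstar : star (A j a / (r : ℂ)) = A a j / (r : ℂ) := by
      rw [star_div₀, hherm.apply a j, Complex.star_def, Complex.conj_ofReal]
    rw [hstar, div_mul_div_comm, hrr]
    have hkey : A i j * (s : ℂ) = A i a * A a j := by
      rw [← hsum]; exact hminor i j a a
    field_simp
    rw [mul_comm (A i j) (s : ℂ), ← hkey, mul_comm]
  · intro hw
    have := congrFun hw a
    simp only [Pi.zero_apply, div_eq_zero_iff] at this
    rcases this with h | h
    · exact haa h
    · exact (Complex.ofReal_ne_zero.mpr hr0.ne') h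

lemma aux_vmv_ne {d : ℕ} {a b : Fin d → ℂ} (ha : a ≠ 0) (hb : b ≠ 0) {z z' : ℂ}
    (h : z • vecMulVec a b = z' • vecMulVec a b) : z = z' := by
  obtain ⟨i, hi⟩ := Function.ne_iff.1 ha
  obtain ⟨j, hj⟩ := Function.ne_iff.1 hb
  have h2 : z * (a i * b j) = z' * (a i * b j) := by
    have := congrFun (congrFun h i) j
    simpa [vecMulVec_apply] using this
  exact mul_right_cancel₀ (mul_ne_zero hi hj) h2

lemma aux_onb {d : ℕ} {P : Fin d → Matrix (Fin d) (Fin d) ℂ} (hP : FineGrained P) :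
    ∃ v : Fin d → Fin d → ℂ, IsONB v ∧ (∀ j, P j = projVec (v j)) ∧ (∀ j, v j ≠ 0) := by
  obtain ⟨hherm, horth, _, hrank⟩ := hP
  have hfac : ∀ j, ∃ w, P j = projVec w ∧ w ≠ 0 := fun j =>
    aux_proj_eq (hherm j) (by simpa using horth j j) (hrank j)
  choose v hv hv0 using hfac
  refine ⟨v, ?_, hv, hv0⟩
  intro i j
  have h := horth i j
  rw [hv i, hv j, projVec, projVec, aux_vmv_mul] at h
  by_cases hij : i = j
  · subst hij
    rw [if_pos rfl] at h
    nth_rewrite 2 [← one_smul ℂ (vecMulVec (v i) (star (v i)))] at h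
    rw [if_pos rfl]
    exact aux_vmv_ne (hv0 i) (star_ne_zero.mpr (hv0 i)) h
  · simp only [if_neg hij] at h ⊢
    rw [← zero_smul ℂ (vecMulVec (v i) (star (v j)))] at h
    exact aux_vmv_ne (hv0 i) (star_ne_zero.mpr (hv0 j)) h

lemma aux_unitary_entry {d : ℕ} (U : Matrix.unitaryGroup (Fin d) ℂ) (i j : Fin d) :
    ‖(U : Matrix (Fin d) (Fin d) ℂ) i j‖ ≤ 1 := by
  have h : (U : Matrix (Fin d) (Fin d) ℂ) * (U : Matrix (Fin d) (Fin d) ℂ)ᴴ = 1 := by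
    have := Matrix.mem_unitaryGroup_iff.mp U.2
    rwa [star_eq_conjTranspose] at this
  have h1 : ((U : Matrix (Fin d) (Fin d) ℂ) * (U : Matrix (Fin d) (Fin d) ℂ)ᴴ) i i
      = (1 : Matrix (Fin d) (Fin d) ℂ) i i := by rw [h]
  rw [mul_apply] at h1
  have h2 : (∑ k, Complex.normSq ((U : Matrix (Fin d) (Fin d) ℂ) i k) : ℝ) = 1 := by
    have h3 : ∑ k, (U : Matrix (Fin d) (Fin d) ℂ) i k * ((U : Matrix (Fin d) (Fin d) ℂ)ᴴ) k i
        = ((∑ k, Complex.normSq ((U : Matrix (Fin d) (Fin d) ℂ) i k) : ℝ) : ℂ) := by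
      push_cast
      refine Finset.sum_congr rfl fun k _ => ?_
      rw [conjTranspose_apply, Complex.star_def, Complex.mul_conj]
    rw [h3, one_apply_eq] at h1
    exact_mod_cast h1
  have h4 : Complex.normSq ((U : Matrix (Fin d) (Fin d) ℂ) i j) ≤ 1 := by
    rw [← h2]
    exact Finset.single_le_sum (fun k _ => Complex.normSq_nonneg _) (Finset.mem_univ j)
  rw [← Complex.sq_norm] at h4
  nlinarith [norm_nonneg ((U : Matrix (Fin d) (Fin d) ℂ) i j)]

lemma aux_bdd {d : ℕ} (H σ : Matrix (Fin d) (Fin d) ℂ) :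
    BddBelow (Set.range fun U : Matrix.unitaryGroup (Fin d) ℂ =>
      ((H * ((U : Matrix (Fin d) (Fin d) ℂ) * σ * ((U : Matrix (Fin d) (Fin d) ℂ))ᴴ)).trace).re) := by
  set S : ℝ := ∑ a, ∑ b, ‖σ a b‖ with hS
  have hS0 : 0 ≤ S := Finset.sum_nonneg fun a _ => Finset.sum_nonneg fun b _ => norm_nonneg _
  refine ⟨-((∑ a, ∑ b, ‖H a b‖) * S), ?_⟩
  rintro x ⟨U, rfl⟩
  set M := (U : Matrix (Fin d) (Fin d) ℂ) * σ * (U : Matrix (Fin d) (Fin d) ℂ)ᴴ with hM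
  have hMbound : ∀ b a, ‖M b a‖ ≤ S := by
    intro b a
    rw [hM, mul_apply]
    calc ‖∑ e, ((U : Matrix (Fin d) (Fin d) ℂ) * σ) b e * ((U : Matrix (Fin d) (Fin d) ℂ)ᴴ) e a‖
        ≤ ∑ e, ‖((U : Matrix (Fin d) (Fin d) ℂ) * σ) b e * ((U : Matrix (Fin d) (Fin d) ℂ)ᴴ) e a‖ :=
          norm_sum_le _ _
      _ ≤ ∑ e, ∑ c, ‖σ c e‖ := by
          refine Finset.sum_le_sum fun e _ => ?_
          rw [norm_mul, mul_apply, conjTranspose_apply, norm_star]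
          calc ‖∑ c, (U : Matrix (Fin d) (Fin d) ℂ) b c * σ c e‖ * ‖(U : Matrix (Fin d) (Fin d) ℂ) a e‖
              ≤ ‖∑ c, (U : Matrix (Fin d) (Fin d) ℂ) b c * σ c e‖ * 1 :=
                mul_le_mul_of_nonneg_left (aux_unitary_entry U a e) (norm_nonneg _)
            _ = ‖∑ c, (U : Matrix (Fin d) (Fin d) ℂ) b c * σ c e‖ := mul_one _
            _ ≤ ∑ c, ‖(U : Matrix (Fin d) (Fin d) ℂ) b c * σ c e‖ := norm_sum_le _ _
            _ ≤ ∑ c, ‖σ c e‖ := by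
                refine Finset.sum_le_sum fun c _ => ?_
                rw [norm_mul]
                calc ‖(U : Matrix (Fin d) (Fin d) ℂ) b c‖ * ‖σ c e‖
                    ≤ 1 * ‖σ c e‖ :=
                      mul_le_mul_of_nonneg_right (aux_unitary_entry U b c) (norm_nonneg _)
                  _ = ‖σ c e‖ := one_mul _
      _ = S := by rw [hS, Finset.sum_comm]
  have htr : ‖(H * M).trace‖ ≤ (∑ a, ∑ b, ‖H a b‖) * S := by
    rw [trace]
    calc ‖∑ a, (H * M).diag a‖ ≤ ∑ a, ‖(H * M) a a‖ := norm_sum_le _ _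
      _ ≤ ∑ a, ∑ b, ‖H a b‖ * S := by
          refine Finset.sum_le_sum fun a _ => ?_
          rw [mul_apply]
          calc ‖∑ b, H a b * M b a‖ ≤ ∑ b, ‖H a b * M b a‖ := norm_sum_le _ _
            _ ≤ ∑ b, ‖H a b‖ * S := by
                refine Finset.sum_le_sum fun b _ => ?_
                rw [norm_mul]
                exact mul_le_mul_of_nonneg_left (hMbound b a) (norm_nonneg _)
      _ = (∑ a, ∑ b, ‖H a b‖) * S := by rw [Finset.sum_mul]; exact Finset.sum_congr rfl fun a _ => (Finset.sum_mul _ _ _).symm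
  have habs : |((H * M).trace).re| ≤ ‖(H * M).trace‖ := Complex.abs_re_le_norm _
  have := neg_abs_le ((H * M).trace).re
  linarith

lemma aux_Epass_le {d : ℕ} (H σ : Matrix (Fin d) (Fin d) ℂ) (U : Matrix.unitaryGroup (Fin d) ℂ) :
    Epass H σ ≤
      ((H * ((U : Matrix (Fin d) (Fin d) ℂ) * σ * ((U : Matrix (Fin d) (Fin d) ℂ))ᴴ)).trace).re :=
  ciInf_le (aux_bdd H σ) U

lemma aux_lin {d : ℕ} (H A : Matrix (Fin d) (Fin d) ℂ) (x : Fin d → ℝ)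
    (P : Fin d → Matrix (Fin d) (Fin d) ℂ) :
    ((H * (A * (∑ k, (x k : ℂ) • P k) * Aᴴ)).trace).re
      = ∑ k, x k * ((H * (A * P k * Aᴴ)).trace).re := by
  have : A * (∑ k, (x k : ℂ) • P k) * Aᴴ = ∑ k, (x k : ℂ) • (A * P k * Aᴴ) := by
    rw [Finset.mul_sum, Finset.sum_mul]
    exact Finset.sum_congr rfl fun k _ => by rw [mul_smul_comm, smul_mul_assoc]
  rw [this, Finset.mul_sum, trace_sum, Complex.re_sum]
  refine Finset.sum_congr rfl fun k _ => ?_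
  rw [mul_smul_comm, trace_smul, smul_eq_mul, Complex.re_ofReal_mul]

/-- fine-grained measurements yield at least as much observational
ergotropy as their classically post-processed (coarse-grained) counterparts. -/
theorem obsErg_postprocess_le {d n : ℕ} (ρ H : Matrix (Fin d) (Fin d) ℂ)
    (hρ : ρ.PosSemidef) (hρtr : ρ.trace = 1) (hH : H.IsHermitian)
    (P : Fin d → Matrix (Fin d) (Fin d) ℂ) (hP : FineGrained P)
    (D : Matrix (Fin n) (Fin d) ℝ) (hD : ColStochastic D)
    (Q : Fin n → Matrix (Fin d) (Fin d) ℂ)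
    (hQ : ∀ i, Q i = ∑ j, (D i j : ℂ) • P j)
    (hQ0 : ∀ i, Q i ≠ 0) :
    obsErg ρ H Q ≤ obsErg ρ H P := by
  obtain ⟨v, hvONB, hvP, hv0⟩ := aux_onb hP
  obtain ⟨hherm, horth, hsumP, hrank⟩ := hP
  set c : Fin d → ℝ := fun k => (star (v k) ⬝ᵥ (ρ *ᵥ v k)).re with hcdef
  have hcC : ∀ k, star (v k) ⬝ᵥ (ρ *ᵥ v k) = (c k : ℂ) := by
    intro k
    have h := hρ.dotProduct_mulVec_nonneg (v k)
    rw [Complex.nonneg_iff] at h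
    exact Complex.ext rfl (by simp [hcdef, ← h.2])
  have hc0 : ∀ k, 0 ≤ c k := fun k => (Complex.nonneg_iff.mp (hρ.dotProduct_mulVec_nonneg (v k))).1
  have htrP : ∀ k, (P k).trace = 1 := by
    intro k
    rw [hvP k, projVec, aux_trace_vmv, dotProduct_comm]
    simpa using hvONB k k
  have htrρP : ∀ k, (ρ * P k).trace = (c k : ℂ) := fun k => by
    rw [hvP k, aux_trace_mul_proj, hcC]
  have hcgP : cgState ρ P = ∑ k, (c k : ℂ) • P k := by
    unfold cgState
    refine Finset.sum_congr rfl fun k _ => ?_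
    rw [htrρP, htrP, div_one]
  set t : Fin n → ℝ := fun i => ∑ j, D i j with htdef
  have ht0 : ∀ i, 0 < t i := by
    intro i
    have hne : ∃ j, D i j ≠ 0 := by
      by_contra hcon
      push_neg at hcon
      apply hQ0 i
      rw [hQ i]
      simp [hcon]
    obtain ⟨j, hj⟩ := hne
    have hlt : 0 < D i j := lt_of_le_of_ne (hD.1 i j) (Ne.symm hj)
    calc (0:ℝ) < D i j := hlt
      _ ≤ t i := Finset.single_le_sum (fun k _ => hD.1 i k) (Finset.mem_univ j)
  have htrQ : ∀ i, (Q i).trace = (t i : ℂ) := by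
    intro i
    rw [hQ i, trace_sum]
    simp only [htdef]
    push_cast
    refine Finset.sum_congr rfl fun j _ => ?_
    rw [trace_smul, htrP, smul_eq_mul, mul_one]
  set q : Fin n → ℝ := fun i => ∑ j, D i j * c j with hqdef
  have hq : ∀ i, (ρ * Q i).trace = ((q i : ℝ) : ℂ) := by
    intro i
    rw [hQ i, Finset.mul_sum, trace_sum]
    simp only [hqdef]
    push_cast
    refine Finset.sum_congr rfl fun j _ => ?_
    rw [mul_smul_comm, trace_smul, htrρP, smul_eq_mul]
  set r : Fin d → ℝ := fun k => ∑ i, D i k * (q i / t i) with hrdef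
  have hcgQ : cgState ρ Q = ∑ k, (r k : ℂ) • P k := by
    unfold cgState
    calc ∑ i, ((ρ * Q i).trace / (Q i).trace) • Q i
        = ∑ i, ∑ k, (((q i / t i) * D i k : ℝ) : ℂ) • P k := by
          refine Finset.sum_congr rfl fun i _ => ?_
          rw [hq i, htrQ i, ← Complex.ofReal_div, hQ i, Finset.smul_sum]
          refine Finset.sum_congr rfl fun k _ => ?_
          rw [smul_smul, ← Complex.ofReal_mul]
      _ = ∑ k, (r k : ℂ) • P k := by
          rw [Finset.sum_comm]
          refine Finset.sum_congr rfl fun k _ => ?_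
          rw [← Finset.sum_smul]
          congr 1
          simp only [hrdef]
          push_cast
          exact Finset.sum_congr rfl fun i _ => by ring
  set B : Matrix (Fin d) (Fin d) ℝ := Matrix.of (fun j k => ∑ i, D i j * D i k / t i) with hBdef
  have hBapp : ∀ j k, B j k = ∑ i, D i j * D i k / t i := fun j k => rfl
  have httd : ∀ i, ∑ k, D i k = t i := fun i => rfl
  have hBmem : B ∈ doublyStochastic ℝ (Fin d) := by
    rw [mem_doublyStochastic_iff_sum]
    refine ⟨fun j k => ?_, ?_, ?_⟩
    · rw [hBapp]
      exact Finset.sum_nonneg fun i _ =>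
        div_nonneg (mul_nonneg (hD.1 i j) (hD.1 i k)) (ht0 i).le
    · intro j
      simp only [hBapp]
      rw [Finset.sum_comm]
      have hrow : ∀ i, ∑ k, D i j * D i k / t i = D i j := by
        intro i
        rw [← Finset.sum_div, ← Finset.mul_sum, httd i, mul_div_assoc,
          div_self (ht0 i).ne', mul_one]
      rw [Finset.sum_congr rfl fun i _ => hrow i]
      exact hD.2 j
    · intro k
      simp only [hBapp]
      rw [Finset.sum_comm]
      have hcol : ∀ i, ∑ j, D i j * D i k / t i = D i k := by
        intro i
        have : ∀ j, D i j * D i k / t i = D i k / t i * D i j := fun j => by ring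
        rw [Finset.sum_congr rfl fun j _ => this j, ← Finset.mul_sum, httd i,
          div_mul_eq_mul_div, mul_div_assoc, div_self (ht0 i).ne', mul_one]
      rw [Finset.sum_congr rfl fun i _ => hcol i]
      exact hD.2 k
  obtain ⟨w, hw0, hw1, hwB⟩ := exists_eq_sum_perm_of_mem_doublyStochastic hBmem
  have hBent : ∀ j k, B j k = ∑ π : Equiv.Perm (Fin d), w π * (if π j = k then 1 else 0) := by
    intro j k
    conv_lhs => rw [← hwB]
    rw [Matrix.sum_apply]
    refine Finset.sum_congr rfl fun π _ => ?_
    simp [Equiv.Perm.permMatrix, PEquiv.toMatrix_apply, Equiv.toPEquiv_apply, eq_comm]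
  have hrB : ∀ k, r k = ∑ l, B k l * c l := by
    intro k
    simp only [hrdef, hBapp, hqdef]
    calc ∑ i, D i k * ((∑ j, D i j * c j) / t i)
        = ∑ i, ∑ l, D i k * D i l / t i * c l := by
          refine Finset.sum_congr rfl fun i _ => ?_
          rw [Finset.sum_div, Finset.mul_sum]
          exact Finset.sum_congr rfl fun l _ => by ring
      _ = ∑ l, (∑ i, D i k * D i l / t i) * c l := by
          rw [Finset.sum_comm]
          exact Finset.sum_congr rfl fun l _ => (Finset.sum_mul _ _ _).symm
  have key : Epass H (cgState ρ P) ≤ Epass H (cgState ρ Q) := by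
    refine le_ciInf fun U => ?_
    set h : Fin d → ℝ := fun j =>
      ((H * ((U : Matrix (Fin d) (Fin d) ℂ) * P j * ((U : Matrix (Fin d) (Fin d) ℂ))ᴴ)).trace).re
      with hhdef
    set g : Equiv.Perm (Fin d) → ℝ := fun π => ∑ l, c l * h (π⁻¹ l) with hgdef
    obtain ⟨π₀, -, hπ₀⟩ := Finset.exists_min_image Finset.univ g ⟨1, Finset.mem_univ 1⟩
    have hval : ((H * ((U : Matrix (Fin d) (Fin d) ℂ) * cgState ρ Q *
        ((U : Matrix (Fin d) (Fin d) ℂ))ᴴ)).trace).re = ∑ π : Equiv.Perm (Fin d), w π * g π := by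
      rw [hcgQ, aux_lin]
      calc ∑ k, r k * h k = ∑ k, ∑ l, (B k l * c l) * h k := by
            refine Finset.sum_congr rfl fun k _ => ?_
            rw [hrB k, Finset.sum_mul]
        _ = ∑ l, c l * ∑ k, B k l * h k := by
            rw [Finset.sum_comm]
            refine Finset.sum_congr rfl fun l _ => ?_
            rw [Finset.mul_sum]
            exact Finset.sum_congr rfl fun k _ => by ring
        _ = ∑ l, c l * ∑ π : Equiv.Perm (Fin d), w π * h (π⁻¹ l) := by
            refine Finset.sum_congr rfl fun l _ => ?_
            congr 1
            calc ∑ k, B k l * h k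
                = ∑ k, ∑ π : Equiv.Perm (Fin d), w π * (if π k = l then 1 else 0) * h k := by
                  refine Finset.sum_congr rfl fun k _ => ?_
                  rw [hBent k l, Finset.sum_mul]
              _ = ∑ π : Equiv.Perm (Fin d), w π * h (π⁻¹ l) := by
                  rw [Finset.sum_comm]
                  refine Finset.sum_congr rfl fun π _ => ?_
                  rw [Finset.sum_eq_single (π⁻¹ l)]
                  · simp
                  · intro k _ hk
                    have hne : π k ≠ l := fun hc => hk (by rw [← hc]; simp)
                    simp [hne]
                  · intro hk
                    exact absurd (Finset.mem_univ _) hk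
        _ = ∑ π : Equiv.Perm (Fin d), w π * g π := by
            simp only [hgdef, Finset.mul_sum]
            rw [Finset.sum_comm]
            exact Finset.sum_congr rfl fun π _ => Finset.sum_congr rfl fun l _ => by ring
    have hmin : g π₀ ≤ ∑ π : Equiv.Perm (Fin d), w π * g π := by
      calc g π₀ = ∑ π : Equiv.Perm (Fin d), w π * g π₀ := by
            rw [← Finset.sum_mul, hw1, one_mul]
        _ ≤ ∑ π : Equiv.Perm (Fin d), w π * g π :=
            Finset.sum_le_sum fun π _ =>
              mul_le_mul_of_nonneg_left (hπ₀ π (Finset.mem_univ π)) (hw0 π)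
    set σp : Equiv.Perm (Fin d) := π₀⁻¹ with hσ
    set V : Matrix (Fin d) (Fin d) ℂ := ∑ k, vecMulVec (v (σp k)) (star (v k)) with hVdef
    have hVH : Vᴴ = ∑ k, vecMulVec (v k) (star (v (σp k))) := by
      rw [hVdef, conjTranspose_sum]
      exact Finset.sum_congr rfl fun k _ => by rw [aux_vmv_conjT, star_star]
    have hsumv : ∑ k, vecMulVec (v k) (star (v k)) = 1 := by
      calc ∑ k, vecMulVec (v k) (star (v k)) = ∑ k, P k :=
            Finset.sum_congr rfl fun k _ => by rw [hvP k]; rfl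
        _ = 1 := hsumP
    have hmul : ∀ (a : Fin d), V * vecMulVec (v a) (star (v a)) * Vᴴ
        = vecMulVec (v (σp a)) (star (v (σp a))) := by
      intro a
      have h1 : V * vecMulVec (v a) (star (v a)) = vecMulVec (v (σp a)) (star (v a)) := by
        rw [hVdef, Finset.sum_mul]
        calc ∑ k, vecMulVec (v (σp k)) (star (v k)) * vecMulVec (v a) (star (v a))
            = ∑ k, (if k = a then (1:ℂ) else 0) • vecMulVec (v (σp k)) (star (v a)) := by
              refine Finset.sum_congr rfl fun k _ => ?_
              rw [aux_vmv_mul, hvONB k a]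
          _ = vecMulVec (v (σp a)) (star (v a)) := by simp
      have h2 : vecMulVec (v (σp a)) (star (v a)) * Vᴴ
          = vecMulVec (v (σp a)) (star (v (σp a))) := by
        rw [hVH, Finset.mul_sum]
        calc ∑ k, vecMulVec (v (σp a)) (star (v a)) * vecMulVec (v k) (star (v (σp k)))
            = ∑ k, (if a = k then (1:ℂ) else 0) • vecMulVec (v (σp a)) (star (v (σp k))) := by
              refine Finset.sum_congr rfl fun k _ => ?_
              rw [aux_vmv_mul, hvONB a k]
          _ = vecMulVec (v (σp a)) (star (v (σp a))) := by simp
      rw [h1, h2]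
    have hVmem : V ∈ Matrix.unitaryGroup (Fin d) ℂ := by
      rw [Matrix.mem_unitaryGroup_iff, star_eq_conjTranspose, hVH, hVdef, Finset.sum_mul]
      calc ∑ k, vecMulVec (v (σp k)) (star (v k)) * (∑ l, vecMulVec (v l) (star (v (σp l))))
          = ∑ k, vecMulVec (v (σp k)) (star (v (σp k))) := by
            refine Finset.sum_congr rfl fun k _ => ?_
            rw [Finset.mul_sum]
            calc ∑ l, vecMulVec (v (σp k)) (star (v k)) * vecMulVec (v l) (star (v (σp l)))
                = ∑ l, (if k = l then (1:ℂ) else 0) • vecMulVec (v (σp k)) (star (v (σp l))) := by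
                  refine Finset.sum_congr rfl fun l _ => ?_
                  rw [aux_vmv_mul, hvONB k l]
              _ = vecMulVec (v (σp k)) (star (v (σp k))) := by simp
        _ = ∑ k, vecMulVec (v k) (star (v k)) :=
            Fintype.sum_equiv σp _ _ (fun k => rfl)
        _ = 1 := hsumv
    set W : Matrix.unitaryGroup (Fin d) ℂ := U * ⟨V, hVmem⟩ with hWdef
    have hWcoe : (W : Matrix (Fin d) (Fin d) ℂ) = (U : Matrix (Fin d) (Fin d) ℂ) * V := rfl
    have hWval : ((H * ((W : Matrix (Fin d) (Fin d) ℂ) * cgState ρ P *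
        ((W : Matrix (Fin d) (Fin d) ℂ))ᴴ)).trace).re = g π₀ := by
      rw [hcgP, aux_lin]
      simp only [hgdef]
      refine Finset.sum_congr rfl fun k _ => ?_
      congr 2
      have hconj : (W : Matrix (Fin d) (Fin d) ℂ) * P k * ((W : Matrix (Fin d) (Fin d) ℂ))ᴴ
          = (U : Matrix (Fin d) (Fin d) ℂ) * P (σp k) * ((U : Matrix (Fin d) (Fin d) ℂ))ᴴ := by
        rw [hWcoe, conjTranspose_mul, hvP k, hvP (σp k), projVec, projVec]
        calc (U : Matrix (Fin d) (Fin d) ℂ) * V * vecMulVec (v k) (star (v k)) *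
              (Vᴴ * ((U : Matrix (Fin d) (Fin d) ℂ))ᴴ)
            = (U : Matrix (Fin d) (Fin d) ℂ) * (V * vecMulVec (v k) (star (v k)) * Vᴴ) *
              ((U : Matrix (Fin d) (Fin d) ℂ))ᴴ := by
              simp only [Matrix.mul_assoc]
          _ = (U : Matrix (Fin d) (Fin d) ℂ) * vecMulVec (v (σp k)) (star (v (σp k))) *
              ((U : Matrix (Fin d) (Fin d) ℂ))ᴴ := by rw [hmul k]
      rw [hconj]
    calc Epass H (cgState ρ P)
        ≤ ((H * ((W : Matrix (Fin d) (Fin d) ℂ) * cgState ρ P *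
            ((W : Matrix (Fin d) (Fin d) ℂ))ᴴ)).trace).re := aux_Epass_le H (cgState ρ P) W
      _ = g π₀ := hWval
      _ ≤ ∑ π : Equiv.Perm (Fin d), w π * g π := hmin
      _ = ((H * ((U : Matrix (Fin d) (Fin d) ℂ) * cgState ρ Q *
            ((U : Matrix (Fin d) (Fin d) ℂ))ᴴ)).trace).re := hval.symm
  unfold obsErg
  exact sub_le_sub_left key _
end

section
/- Let ρ be a quantum state on a d-dimensional Hilbert space with Hamiltonian H having spectral decomposition H = Σ_j E_j |E_j⟩⟨E_j| with orthonormal eigenbasis {|E_j⟩}. Consider the set of energy-incoherent POVMs, i.e. measurements N = {N_i}_{i=1}^n of the form N_i = Σ_j q(i|j) |E_j⟩⟨E_j| for a column-stochastic matrix q(i|j), with every N_i nonzero. Then the supremum of the observational ergotropy R(ρ, N) over all such energy-incoherent POVMs equals the incoherent ergotropy R_incoherent(ρ), and it is attained by the projective measurement E = {|E_j⟩⟨E_j|}_{j=1}^d. -/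
open Matrix ComplexOrder

section AuxLemmas

variable {d : ℕ}

lemma vmv_mul_vmv (a b c e : Fin d → ℂ) :
    vecMulVec a b * vecMulVec c e = (b ⬝ᵥ c) • vecMulVec a e := by
  ext i j
  simp only [Matrix.mul_apply, vecMulVec_apply, Matrix.smul_apply, smul_eq_mul, dotProduct,
    Finset.sum_mul]
  exact Finset.sum_congr rfl fun k _ => by ring

lemma trace_vmv (a b : Fin d → ℂ) : (vecMulVec a b).trace = b ⬝ᵥ a := by
  simp [Matrix.trace, Matrix.diag, vecMulVec_apply, dotProduct, mul_comm]

lemma mul_vmv (M : Matrix (Fin d) (Fin d) ℂ) (a b : Fin d → ℂ) :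
    M * vecMulVec a b = vecMulVec (M *ᵥ a) b := by
  ext i j
  simp only [Matrix.mul_apply, vecMulVec_apply, mulVec, dotProduct, Finset.sum_mul]
  exact Finset.sum_congr rfl fun k _ => by ring

lemma vmv_conjT (a b : Fin d → ℂ) : (vecMulVec a b)ᴴ = vecMulVec (star b) (star a) := by
  ext i j
  simp [conjTranspose_apply, vecMulVec_apply, Pi.star_apply, mul_comm]

lemma trace_mul_proj (ρ : Matrix (Fin d) (Fin d) ℂ) (w : Fin d → ℂ) :
    (ρ * projVec w).trace = star w ⬝ᵥ (ρ *ᵥ w) := by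
  rw [projVec, mul_vmv, trace_vmv]

variable {v : Fin d → (Fin d → ℂ)}

lemma proj_mul_proj (hv : IsONB v) (i j : Fin d) :
    projVec (v i) * projVec (v j) = if i = j then projVec (v i) else 0 := by
  rw [projVec, projVec, vmv_mul_vmv, hv i j]
  split <;> simp_all [projVec]

lemma trace_proj (hv : IsONB v) (j : Fin d) : (projVec (v j)).trace = 1 := by
  rw [projVec, trace_vmv]
  simpa using hv j j

lemma sum_proj (hv : IsONB v) : ∑ j, projVec (v j) = 1 := by
  set V : Matrix (Fin d) (Fin d) ℂ := Matrix.of (fun a j => v j a) with hV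
  have h1 : Vᴴ * V = 1 := by
    ext i j
    have := hv i j
    simp only [Matrix.mul_apply, conjTranspose_apply, hV, Matrix.of_apply, Matrix.one_apply]
    simpa [dotProduct, Pi.star_apply] using this
  have h2 : V * Vᴴ = 1 := mul_eq_one_comm.mpr h1
  ext a b
  rw [← h2]
  simp [Matrix.sum_apply, projVec, vecMulVec_apply, Matrix.mul_apply, hV, Pi.star_apply,
    conjTranspose_apply]

lemma Epass_conj (H A : Matrix (Fin d) (Fin d) ℂ) (U₀ : Matrix.unitaryGroup (Fin d) ℂ) :
    Epass H ((U₀ : Matrix (Fin d) (Fin d) ℂ) * A * ((U₀ : Matrix (Fin d) (Fin d) ℂ))ᴴ)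
      = Epass H A := by
  have hs : Function.Surjective (fun W : Matrix.unitaryGroup (Fin d) ℂ => W * U₀) :=
    (Equiv.mulRight U₀).surjective
  have hr := Function.Surjective.range_comp hs (fun U : Matrix.unitaryGroup (Fin d) ℂ =>
      ((H * ((U : Matrix (Fin d) (Fin d) ℂ) * A * ((U : Matrix (Fin d) (Fin d) ℂ))ᴴ)).trace).re)
  have hf : ((fun U : Matrix.unitaryGroup (Fin d) ℂ =>
      ((H * ((U : Matrix (Fin d) (Fin d) ℂ) * A * ((U : Matrix (Fin d) (Fin d) ℂ))ᴴ)).trace).re)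
        ∘ (fun W : Matrix.unitaryGroup (Fin d) ℂ => W * U₀))
      = fun W : Matrix.unitaryGroup (Fin d) ℂ =>
        ((H * ((W : Matrix (Fin d) (Fin d) ℂ)
          * ((U₀ : Matrix (Fin d) (Fin d) ℂ) * A * ((U₀ : Matrix (Fin d) (Fin d) ℂ))ᴴ)
          * ((W : Matrix (Fin d) (Fin d) ℂ))ᴴ)).trace).re := by
    funext W
    simp only [Function.comp_apply, MulMemClass.coe_mul, conjTranspose_mul, mul_assoc]
  unfold Epass
  rw [iInf, iInf, ← hr, hf]

lemma unitary_entry_norm_le (U : Matrix.unitaryGroup (Fin d) ℂ) (a j : Fin d) :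
    ‖(U : Matrix (Fin d) (Fin d) ℂ) a j‖ ≤ 1 := by
  have h1 : star (U : Matrix (Fin d) (Fin d) ℂ) * U = 1 := U.2.1
  have h2 : ((star (U : Matrix (Fin d) (Fin d) ℂ) * U) j j).re = 1 := by rw [h1]; simp
  have h3 : ∑ b, ‖(U : Matrix (Fin d) (Fin d) ℂ) b j‖ ^ 2 = 1 := by
    rw [← h2]
    simp only [Matrix.mul_apply, Matrix.star_apply, Complex.re_sum]
    refine Finset.sum_congr rfl fun b _ => ?_
    have hz : star ((U : Matrix (Fin d) (Fin d) ℂ) b j) * (U : Matrix (Fin d) (Fin d) ℂ) b j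
        = (Complex.normSq ((U : Matrix (Fin d) (Fin d) ℂ) b j) : ℂ) := by
      rw [RCLike.star_def, Complex.normSq_eq_conj_mul_self]
    rw [hz, Complex.ofReal_re, ← Complex.sq_norm]
  have h4 : ‖(U : Matrix (Fin d) (Fin d) ℂ) a j‖ ^ 2 ≤ 1 := by
    rw [← h3]
    exact Finset.single_le_sum
      (f := fun b => ‖(U : Matrix (Fin d) (Fin d) ℂ) b j‖ ^ 2)
      (fun b _ => sq_nonneg _) (Finset.mem_univ a)
  nlinarith [norm_nonneg ((U : Matrix (Fin d) (Fin d) ℂ) a j)]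

lemma Epass_bddBelow (H A : Matrix (Fin d) (Fin d) ℂ) :
    BddBelow (Set.range fun U : Matrix.unitaryGroup (Fin d) ℂ =>
      ((H * ((U : Matrix (Fin d) (Fin d) ℂ) * A * ((U : Matrix (Fin d) (Fin d) ℂ))ᴴ)).trace).re) := by
  refine ⟨-(∑ a : Fin d, ∑ b : Fin d, ∑ c : Fin d, ∑ e : Fin d, ‖H a b‖ * ‖A e c‖), ?_⟩
  rintro x ⟨U, rfl⟩
  have hexp : (H * ((U : Matrix (Fin d) (Fin d) ℂ) * A * ((U : Matrix (Fin d) (Fin d) ℂ))ᴴ)).trace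
      = ∑ a : Fin d, ∑ b : Fin d, ∑ c : Fin d, ∑ e : Fin d,
          H a b * ((U : Matrix (Fin d) (Fin d) ℂ) b e
            * (A e c * (starRingEnd ℂ) ((U : Matrix (Fin d) (Fin d) ℂ) a c))) := by
    simp only [Matrix.trace, Matrix.diag, Matrix.mul_apply, conjTranspose_apply,
      Finset.mul_sum, Finset.sum_mul, RCLike.star_def]
    refine Finset.sum_congr rfl fun a _ => Finset.sum_congr rfl fun b _ => ?_
    refine Finset.sum_congr rfl fun c _ => Finset.sum_congr rfl fun e _ => by ring
  have hb : ‖(H * ((U : Matrix (Fin d) (Fin d) ℂ) * A * ((U : Matrix (Fin d) (Fin d) ℂ))ᴴ)).trace‖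
      ≤ ∑ a : Fin d, ∑ b : Fin d, ∑ c : Fin d, ∑ e : Fin d, ‖H a b‖ * ‖A e c‖ := by
    rw [hexp]
    refine (norm_sum_le _ _).trans (Finset.sum_le_sum fun a _ => ?_)
    refine (norm_sum_le _ _).trans (Finset.sum_le_sum fun b _ => ?_)
    refine (norm_sum_le _ _).trans (Finset.sum_le_sum fun c _ => ?_)
    refine (norm_sum_le _ _).trans (Finset.sum_le_sum fun e _ => ?_)
    rw [norm_mul, norm_mul, norm_mul, RCLike.norm_conj]
    have h1 := unitary_entry_norm_le U b e
    have h2 := unitary_entry_norm_le U a c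
    have n1 := norm_nonneg (H a b); have n2 := norm_nonneg (A e c)
    have n3 := norm_nonneg ((U : Matrix (Fin d) (Fin d) ℂ) b e)
    have n4 := norm_nonneg ((U : Matrix (Fin d) (Fin d) ℂ) a c)
    nlinarith [mul_nonneg n1 n2, mul_le_mul h1 h2 n4 zero_le_one]
  have h5 := neg_abs_le
    ((H * ((U : Matrix (Fin d) (Fin d) ℂ) * A * ((U : Matrix (Fin d) (Fin d) ℂ))ᴴ)).trace).re
  have habs := Complex.abs_re_le_norm
    ((H * ((U : Matrix (Fin d) (Fin d) ℂ) * A * ((U : Matrix (Fin d) (Fin d) ℂ))ᴴ)).trace)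
  dsimp only
  linarith

lemma Epass_sum_le {ι : Type*} [Fintype ι] (H : Matrix (Fin d) (Fin d) ℂ)
    (w : ι → ℝ) (hw : ∀ k, 0 ≤ w k) (A : ι → Matrix (Fin d) (Fin d) ℂ) :
    ∑ k, w k * Epass H (A k) ≤ Epass H (∑ k, (w k : ℂ) • A k) := by
  unfold Epass
  refine le_ciInf fun U => ?_
  have hexp : ((H * ((U : Matrix (Fin d) (Fin d) ℂ) * (∑ k, (w k : ℂ) • A k)
      * ((U : Matrix (Fin d) (Fin d) ℂ))ᴴ)).trace).re
      = ∑ k, w k * ((H * ((U : Matrix (Fin d) (Fin d) ℂ) * A k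
        * ((U : Matrix (Fin d) (Fin d) ℂ))ᴴ)).trace).re := by
    simp [Matrix.mul_sum, Matrix.sum_mul, Matrix.mul_smul, Matrix.smul_mul,
      Matrix.trace_sum, Complex.re_sum, Complex.re_ofReal_mul]
  rw [hexp]
  refine Finset.sum_le_sum fun k _ => ?_
  exact mul_le_mul_of_nonneg_left (ciInf_le (Epass_bddBelow H (A k)) U) (hw k)

/-- diagonal (in basis `v`) matrix with coefficients `c`. -/
noncomputable def Dm (v : Fin d → (Fin d → ℂ)) (c : Fin d → ℂ) :
    Matrix (Fin d) (Fin d) ℂ := ∑ j, c j • projVec (v j)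

/-- permutation unitary in basis `v`. -/
noncomputable def Uperm (v : Fin d → (Fin d → ℂ)) (σ : Equiv.Perm (Fin d)) :
    Matrix (Fin d) (Fin d) ℂ := ∑ j, vecMulVec (v (σ j)) (star (v j))

lemma Uperm_conjT (σ : Equiv.Perm (Fin d)) :
    (Uperm v σ)ᴴ = ∑ j, vecMulVec (v j) (star (v (σ j))) := by
  rw [Uperm, conjTranspose_sum]
  exact Finset.sum_congr rfl fun j _ => by rw [vmv_conjT, star_star]

lemma Uperm_mem (hv : IsONB v) (σ : Equiv.Perm (Fin d)) :
    Uperm v σ ∈ Matrix.unitaryGroup (Fin d) ℂ := by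
  rw [Matrix.mem_unitaryGroup_iff]
  have : star (Uperm v σ) = (Uperm v σ)ᴴ := rfl
  rw [this, Uperm_conjT, Uperm, Finset.sum_mul_sum]
  have key : ∀ j k, vecMulVec (v (σ j)) (star (v j)) * vecMulVec (v k) (star (v (σ k)))
      = if j = k then projVec (v (σ j)) else 0 := by
    intro j k
    rw [vmv_mul_vmv, hv j k]
    split <;> simp_all [projVec]
  calc (∑ j, ∑ k, vecMulVec (v (σ j)) (star (v j)) * vecMulVec (v k) (star (v (σ k))))
      = ∑ j, ∑ k, if j = k then projVec (v (σ j)) else 0 :=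
        Finset.sum_congr rfl fun j _ => Finset.sum_congr rfl fun k _ => key j k
    _ = ∑ j, projVec (v (σ j)) := by simp
    _ = ∑ j, projVec (v j) := Equiv.sum_comp σ (fun j => projVec (v j))
    _ = 1 := sum_proj hv

lemma Uperm_proj (hv : IsONB v) (σ : Equiv.Perm (Fin d)) (j : Fin d) :
    Uperm v σ * projVec (v j) * (Uperm v σ)ᴴ = projVec (v (σ j)) := by
  have h1 : Uperm v σ * projVec (v j) = vecMulVec (v (σ j)) (star (v j)) := by
    rw [Uperm, projVec, Finset.sum_mul]
    have key : ∀ k, vecMulVec (v (σ k)) (star (v k)) * vecMulVec (v j) (star (v j))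
        = if k = j then vecMulVec (v (σ j)) (star (v j)) else 0 := by
      intro k
      rw [vmv_mul_vmv, hv k j]
      split <;> simp_all
    rw [Finset.sum_congr rfl fun k _ => key k]
    simp
  rw [h1, Uperm_conjT, Finset.mul_sum]
  have key : ∀ k, vecMulVec (v (σ j)) (star (v j)) * vecMulVec (v k) (star (v (σ k)))
      = if j = k then projVec (v (σ j)) else 0 := by
    intro k
    rw [vmv_mul_vmv, hv j k]
    split <;> simp_all [projVec]
  rw [Finset.sum_congr rfl fun k _ => key k]
  simp

lemma Uperm_Dm (hv : IsONB v) (σ : Equiv.Perm (Fin d)) (c : Fin d → ℂ) :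
    Uperm v σ * Dm v (c ∘ σ) * (Uperm v σ)ᴴ = Dm v c := by
  have h : Uperm v σ * Dm v (c ∘ σ) * (Uperm v σ)ᴴ
      = ∑ j, c (σ j) • (Uperm v σ * projVec (v j) * (Uperm v σ)ᴴ) := by
    rw [Dm, Finset.mul_sum, Finset.sum_mul]
    exact Finset.sum_congr rfl fun j _ => by
      simp [Matrix.mul_smul, Matrix.smul_mul, Function.comp]
  rw [h, Finset.sum_congr rfl fun j _ => by rw [Uperm_proj hv]]
  exact Equiv.sum_comp σ (fun j => c j • projVec (v j))

lemma Epass_Dm_comp (hv : IsONB v) (H : Matrix (Fin d) (Fin d) ℂ) (σ : Equiv.Perm (Fin d))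
    (c : Fin d → ℂ) : Epass H (Dm v (c ∘ σ)) = Epass H (Dm v c) := by
  have h := Epass_conj H (Dm v (c ∘ σ)) ⟨Uperm v σ, Uperm_mem hv σ⟩
  have h2 : ((⟨Uperm v σ, Uperm_mem hv σ⟩ : Matrix.unitaryGroup (Fin d) ℂ) :
      Matrix (Fin d) (Fin d) ℂ) = Uperm v σ := rfl
  rw [h2, Uperm_Dm hv σ c] at h
  exact h.symm

lemma H_mul_Dm (hv : IsONB v) (E : Fin d → ℝ) (c : Fin d → ℂ) :
    (∑ j, (E j : ℂ) • projVec (v j)) * Dm v c = Dm v (fun j => (E j : ℂ) * c j) := by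
  rw [Dm, Finset.sum_mul]
  have key : ∀ j, (E j : ℂ) • projVec (v j) * ∑ k, c k • projVec (v k)
      = (E j : ℂ) • (c j • projVec (v j)) := by
    intro j
    rw [Finset.mul_sum]
    have h : ∀ k, (E j : ℂ) • projVec (v j) * (c k • projVec (v k))
        = if j = k then ((E j : ℂ) * c k) • projVec (v j) else 0 := by
      intro k
      rw [Matrix.smul_mul, Matrix.mul_smul, proj_mul_proj hv, smul_ite, smul_ite]
      split <;> simp [smul_smul]
    rw [Finset.sum_congr rfl fun k _ => h k]
    simp [smul_smul]
  rw [Finset.sum_congr rfl fun j _ => key j, Dm]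
  exact Finset.sum_congr rfl fun j _ => by rw [smul_smul]

lemma trace_Dm (hv : IsONB v) (c : Fin d → ℂ) : (Dm v c).trace = ∑ j, c j := by
  rw [Dm, trace_sum]
  refine Finset.sum_congr rfl fun j _ => ?_
  rw [trace_smul, projVec, trace_vmv, hv j j]
  simp

lemma sum_smul_Dm {ι : Type*} [Fintype ι] (v : Fin d → (Fin d → ℂ)) (a : ι → ℂ)
    (c : ι → Fin d → ℂ) :
    ∑ i, a i • Dm v (c i) = Dm v (fun j => ∑ i, a i * c i j) := by
  unfold Dm
  simp only [Finset.smul_sum, smul_smul]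
  rw [Finset.sum_comm]
  exact Finset.sum_congr rfl fun j _ => (Finset.sum_smul).symm

end AuxLemmas


lemma trace_mul_Dm' {d : ℕ} {v : Fin d → (Fin d → ℂ)} (hv : IsONB v)
    (ρ : Matrix (Fin d) (Fin d) ℂ) (c : Fin d → ℂ) :
    (ρ * Dm v c).trace = ∑ j, c j * (star (v j) ⬝ᵥ (ρ *ᵥ v j)) := by
  rw [Dm, Finset.mul_sum, trace_sum]
  refine Finset.sum_congr rfl fun j _ => ?_
  rw [Matrix.mul_smul, trace_smul, projVec, mul_vmv, trace_vmv, smul_eq_mul]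

/-- over all energy-incoherent POVMs, the observational ergotropy
has supremum equal to the incoherent ergotropy, attained by the projective
measurement in the energy eigenbasis. -/

theorem obsErg_energyIncoherent_isGreatest {d : ℕ} (ρ H : Matrix (Fin d) (Fin d) ℂ)
    (hρ : ρ.PosSemidef) (hρtr : ρ.trace = 1)
    (E : Fin d → ℝ) (v : Fin d → (Fin d → ℂ)) (hv : IsONB v)
    (hH : H = ∑ j, (E j : ℂ) • projVec (v j)) :
    obsErg ρ H (fun j => projVec (v j)) = Rincoherent ρ H v ∧
    IsGreatest
      {r : ℝ | ∃ (n : ℕ) (q : Matrix (Fin n) (Fin d) ℝ)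
          (N : Fin n → Matrix (Fin d) (Fin d) ℂ),
          ColStochastic q ∧
          (∀ i, N i = ∑ j, (q i j : ℂ) • projVec (v j)) ∧
          (∀ i, N i ≠ 0) ∧ r = obsErg ρ H N}
      (Rincoherent ρ H v) := by
  classical
  have hherm : ρᴴ = ρ := hρ.1
  -- real populations
  set pr : Fin d → ℝ := fun j => (star (v j) ⬝ᵥ (ρ *ᵥ v j)).re with hprdef
  have hreal : ∀ j, star (v j) ⬝ᵥ (ρ *ᵥ v j) = ((pr j : ℝ) : ℂ) := by
    intro j
    have hconj : (starRingEnd ℂ) (star (v j) ⬝ᵥ (ρ *ᵥ v j)) = star (v j) ⬝ᵥ (ρ *ᵥ v j) := by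
      calc (starRingEnd ℂ) (star (v j) ⬝ᵥ (ρ *ᵥ v j))
          = star (star (v j) ⬝ᵥ (ρ *ᵥ v j)) := rfl
        _ = star (star (star (ρ *ᵥ v j) ⬝ᵥ (v j))) := by rw [Matrix.star_dotProduct]
        _ = star (ρ *ᵥ v j) ⬝ᵥ v j := by rw [star_star]
        _ = (star (v j) ᵥ* ρᴴ) ⬝ᵥ v j := by rw [Matrix.star_mulVec]
        _ = (star (v j) ᵥ* ρ) ⬝ᵥ v j := by rw [hherm]
        _ = star (v j) ⬝ᵥ (ρ *ᵥ v j) := (Matrix.dotProduct_mulVec _ _ _).symm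
    exact (Complex.conj_eq_iff_re.mp hconj).symm
  have hdep : dephase ρ v = Dm v (fun j => ((pr j : ℝ) : ℂ)) := by
    rw [dephase, Dm]
    exact Finset.sum_congr rfl fun j _ => by rw [hreal j]
  -- trace identities
  have htrHρ : (H * ρ).trace = ∑ j, (E j : ℂ) * ((pr j : ℝ) : ℂ) := by
    rw [hH, Finset.sum_mul, trace_sum]
    refine Finset.sum_congr rfl fun j _ => ?_
    rw [Matrix.smul_mul, trace_smul, smul_eq_mul, Matrix.trace_mul_comm, trace_mul_proj,
      hreal j]
  have htrHdep : (H * dephase ρ v).trace = ∑ j, (E j : ℂ) * ((pr j : ℝ) : ℂ) := by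
    rw [hdep, hH, H_mul_Dm hv, trace_Dm hv]
  have htr_re : ((H * ρ).trace).re = ((H * dephase ρ v).trace).re := by
    rw [htrHρ, htrHdep]
  -- the projective measurement achieves the incoherent ergotropy
  have hcgproj : cgState ρ (fun j => projVec (v j)) = dephase ρ v := by
    rw [cgState, dephase]
    refine Finset.sum_congr rfl fun j _ => ?_
    rw [trace_mul_proj, trace_proj hv, div_one]
  have hfirst : obsErg ρ H (fun j => projVec (v j)) = Rincoherent ρ H v := by
    rw [obsErg, Rincoherent, hcgproj, htr_re]
  refine ⟨hfirst, ?_, ?_⟩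
  · -- membership
    refine ⟨d, 1, fun j => projVec (v j), ⟨?_, ?_⟩, ?_, ?_, hfirst.symm⟩
    · intro i j
      rw [Matrix.one_apply]
      split <;> norm_num
    · intro j
      simp [Matrix.one_apply]
    · intro i
      have : ∀ j, (((1 : Matrix (Fin d) (Fin d) ℝ) i j : ℝ) : ℂ) • projVec (v j)
          = if i = j then projVec (v j) else 0 := by
        intro j
        by_cases h : i = j <;> simp [Matrix.one_apply, h]
      rw [Finset.sum_congr rfl fun j _ => this j]
      simp
    · intro i h
      have := congrArg Matrix.trace h
      rw [trace_proj hv] at this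
      simp at this
  · -- upper bound
    rintro r ⟨n, q, N, ⟨hqpos, hqsum⟩, hN, hNz, rfl⟩
    -- positivity of row sums of q
    have hspos : ∀ i, 0 < ∑ j, q i j := by
      intro i
      have h0 : 0 ≤ ∑ j, q i j := Finset.sum_nonneg fun j _ => hqpos i j
      rcases h0.lt_or_eq with h | h
      · exact h
      · exfalso
        apply hNz i
        have hz : ∀ j, q i j = 0 := fun j =>
          (Finset.sum_eq_zero_iff_of_nonneg (fun j _ => hqpos i j)).mp h.symm j (Finset.mem_univ j)
        rw [hN i]
        simp [hz]
    have hsne : ∀ i, (∑ j, q i j) ≠ 0 := fun i => (hspos i).ne'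
    -- coarse-grained state is diagonal with populations p'
    set p' : Fin d → ℝ := fun j => ∑ i, (∑ j', q i j' * pr j') / (∑ j', q i j') * q i j
      with hp'def
    have hNi : ∀ i, N i = Dm v (fun j => ((q i j : ℝ) : ℂ)) := fun i => hN i
    have htrNi : ∀ i, (N i).trace = (((∑ j, q i j : ℝ)) : ℂ) := by
      intro i
      rw [hNi i, trace_Dm hv]
      push_cast
      rfl
    have htrρNi : ∀ i, (ρ * N i).trace = (((∑ j, q i j * pr j : ℝ)) : ℂ) := by
      intro i
      rw [hNi i, trace_mul_Dm' hv]
      push_cast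
      exact Finset.sum_congr rfl fun j _ => by rw [hreal j]
    have hcg : cgState ρ N = Dm v (fun j => ((p' j : ℝ) : ℂ)) := by
      rw [cgState]
      have hstep : ∀ i, ((ρ * N i).trace / (N i).trace) • N i
          = (((((∑ j', q i j' * pr j') / (∑ j', q i j') : ℝ)) : ℂ))
            • Dm v (fun j => ((q i j : ℝ) : ℂ)) := by
        intro i
        rw [htrNi i, htrρNi i, hNi i, Complex.ofReal_div]
      rw [Finset.sum_congr rfl fun i _ => hstep i, sum_smul_Dm]
      congr 1
      funext j
      rw [hp'def]
      push_cast
      rfl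
    -- the doubly stochastic matrix B
    set B : Matrix (Fin d) (Fin d) ℝ :=
      Matrix.of (fun j j' => ∑ i, q i j * q i j' / (∑ j'', q i j'')) with hBdef
    have hB : B ∈ doublyStochastic ℝ (Fin d) := by
      rw [mem_doublyStochastic_iff_sum]
      refine ⟨fun j j' => ?_, ?_, ?_⟩
      · rw [hBdef]
        simp only [Matrix.of_apply]
        exact Finset.sum_nonneg fun i _ =>
          div_nonneg (mul_nonneg (hqpos i j) (hqpos i j')) (hspos i).le
      · intro j
        rw [hBdef]
        simp only [Matrix.of_apply]
        rw [Finset.sum_comm]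
        have : ∀ i, ∑ j', q i j * q i j' / (∑ j'', q i j'') = q i j := by
          intro i
          rw [← Finset.sum_div, ← Finset.mul_sum, mul_div_assoc,
            div_self (hsne i), mul_one]
        rw [Finset.sum_congr rfl fun i _ => this i]
        exact hqsum j
      · intro j'
        rw [hBdef]
        simp only [Matrix.of_apply]
        rw [Finset.sum_comm]
        have : ∀ i, ∑ j, q i j * q i j' / (∑ j'', q i j'') = q i j' := by
          intro i
          rw [← Finset.sum_div, ← Finset.sum_mul, mul_comm, mul_div_assoc,
            div_self (hsne i), mul_one]
        rw [Finset.sum_congr rfl fun i _ => this i]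
        exact hqsum j'
    have hp'B : ∀ j, p' j = ∑ j', B j j' * pr j' := by
      intro j
      rw [hp'def, hBdef]
      simp only [Matrix.of_apply]
      have : ∀ i, (∑ j', q i j' * pr j') / (∑ j'', q i j'') * q i j
          = ∑ j', q i j * q i j' / (∑ j'', q i j'') * pr j' := by
        intro i
        rw [Finset.sum_div, Finset.sum_mul]
        exact Finset.sum_congr rfl fun j' _ => by ring
      rw [Finset.sum_congr rfl fun i _ => this i, Finset.sum_comm]
      exact Finset.sum_congr rfl fun j' _ => by rw [Finset.sum_mul]
    -- Birkhoff decomposition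
    obtain ⟨w, hw0, hw1, hwB⟩ := exists_eq_sum_perm_of_mem_doublyStochastic hB
    have hpm : ∀ (σ : Equiv.Perm (Fin d)) (j j' : Fin d),
        (σ.permMatrix ℝ) j j' = if j' = σ j then 1 else 0 := by
      intro σ j j'
      simp only [Equiv.Perm.permMatrix, PEquiv.toMatrix_apply, Equiv.toPEquiv_apply,
        Option.mem_def, Option.some.injEq]
      by_cases h : j' = σ j
      · simp [h]
      · rw [if_neg (fun hh => h hh.symm), if_neg h]
    have hp'w : ∀ j, p' j = ∑ σ : Equiv.Perm (Fin d), w σ * pr (σ j) := by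
      intro j
      rw [hp'B j, ← hwB]
      simp only [Matrix.sum_apply, Matrix.smul_apply, hpm, smul_eq_mul, mul_ite, mul_one,
        mul_zero, Finset.sum_mul, Finset.sum_ite_eq, ite_mul, zero_mul]
      rw [Finset.sum_comm]
      refine Finset.sum_congr rfl fun σ _ => ?_
      simp
    -- coarse-grained state as mixture of permuted dephased states
    have hmix : cgState ρ N
        = ∑ σ : Equiv.Perm (Fin d), ((w σ : ℝ) : ℂ) • Dm v (fun j => ((pr (σ j) : ℝ) : ℂ)) := by
      rw [hcg, sum_smul_Dm]
      have hfun : (fun j => ((p' j : ℝ) : ℂ))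
          = fun j => ∑ σ : Equiv.Perm (Fin d), ((w σ : ℝ) : ℂ) * ((pr (σ j) : ℝ) : ℂ) := by
        funext j
        rw [hp'w j]
        push_cast
        rfl
      rw [hfun]
    -- Epass comparison
    have hEp : Epass H (dephase ρ v) ≤ Epass H (cgState ρ N) := by
      calc Epass H (dephase ρ v)
          = ∑ σ : Equiv.Perm (Fin d), w σ * Epass H (dephase ρ v) := by
            rw [← Finset.sum_mul, hw1, one_mul]
        _ = ∑ σ : Equiv.Perm (Fin d), w σ * Epass H (Dm v (fun j => ((pr (σ j) : ℝ) : ℂ))) := by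
            refine Finset.sum_congr rfl fun σ _ => ?_
            have h := Epass_Dm_comp hv H σ (fun j => ((pr j : ℝ) : ℂ))
            simp only [Function.comp_def] at h
            rw [hdep, ← h]
        _ ≤ Epass H (∑ σ : Equiv.Perm (Fin d),
              ((w σ : ℝ) : ℂ) • Dm v (fun j => ((pr (σ j) : ℝ) : ℂ))) :=
            Epass_sum_le H w hw0 _
        _ = Epass H (cgState ρ N) := by rw [hmix]
    -- conclude
    rw [obsErg, Rincoherent, htr_re]
    exact sub_le_sub_left hEp _
end

section
/- Let ρ be a quantum state on a d-dimensional Hilbert space, let P = {P_i}_{i=1}^d be a fine-grained measurement, and let Q = {Q_i}_{i=1}^n be the coarse-grained measurement obtained from P by classical post-processing via a column-stochastic matrix D, i.e. Q_i = Σ_j D_{ij} P_j, with every Q_i nonzero. Then the vector of eigenvalues of the coarse-grained state ρ_cg^P majorizes the vector of eigenvalues of the coarse-grained state ρ_cg^Q, i.e. λ(ρ_cg^Q) ≺ λ(ρ_cg^P). -/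
open Matrix ComplexOrder

section AuxMajorization

lemma descSort_antitone {d : ℕ} (x : Fin d → ℝ) : Antitone (descSort x) :=
  fun _ _ hij => Tuple.monotone_sort x (Fin.rev_le_rev.mpr hij)

lemma sum_comp_descSort {d : ℕ} (x : Fin d → ℝ) (g : ℝ → ℝ) :
    ∑ i, g (descSort x i) = ∑ i, g (x i) :=
  Equiv.sum_comp (Fin.revPerm.trans (Tuple.sort x)) (g ∘ x)

lemma sum_descSort {d : ℕ} (x : Fin d → ℝ) :
    ∑ i, descSort x i = ∑ i, x i :=
  Equiv.sum_comp (Fin.revPerm.trans (Tuple.sort x)) x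

lemma descSort_eq_of_perm {d : ℕ} {x y : Fin d → ℝ} (h : (List.ofFn x).Perm (List.ofFn y)) :
    descSort x = descSort y := by
  have hp : (List.ofFn (x ∘ Tuple.sort x)).Perm (List.ofFn (y ∘ Tuple.sort y)) :=
    ((Tuple.sort x).ofFn_comp_perm x).trans (h.trans ((Tuple.sort y).ofFn_comp_perm y).symm)
  have hs := List.Perm.eq_of_sortedLE
    (List.sortedLE_ofFn_iff.mpr (Tuple.monotone_sort x))
    (List.sortedLE_ofFn_iff.mpr (Tuple.monotone_sort y)) hp
  have h2 := List.ofFn_injective hs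
  funext i
  exact congrFun h2 i.rev

lemma sum_eq_of_perm {d : ℕ} {x y : Fin d → ℝ} (h : (List.ofFn x).Perm (List.ofFn y)) :
    ∑ i, x i = ∑ i, y i := by
  have := h.sum_eq
  rwa [List.sum_ofFn, List.sum_ofFn] at this

lemma majorized_congr {d : ℕ} {x x' y y' : Fin d → ℝ}
    (hx : (List.ofFn x).Perm (List.ofFn x')) (hy : (List.ofFn y).Perm (List.ofFn y'))
    (h : Majorized x y) : Majorized x' y' := by
  obtain ⟨h1, h2⟩ := h
  refine ⟨?_, ?_⟩
  · rw [← descSort_eq_of_perm hx, ← descSort_eq_of_perm hy]; exact h1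
  · rw [← sum_eq_of_perm hx, ← sum_eq_of_perm hy]; exact h2

lemma sum_if_lt_const {d k : ℕ} (hkd : k ≤ d) (t : ℝ) :
    (∑ i : Fin d, if (i : ℕ) < k then t else 0) = k * t := by
  rw [Fin.sum_univ_eq_sum_range (fun m => if m < k then t else 0) d,
    Finset.range_eq_Ico, ← Finset.sum_Ico_consecutive _ (Nat.zero_le k) hkd]
  have h1 : ∑ m ∈ Finset.Ico 0 k, (if m < k then t else 0) = ∑ m ∈ Finset.Ico 0 k, t :=
    Finset.sum_congr rfl (fun m hm => if_pos (Finset.mem_Ico.mp hm).2)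
  have h2 : ∑ m ∈ Finset.Ico k d, (if m < k then t else 0) = 0 :=
    Finset.sum_eq_zero (fun m hm => if_neg (by have := (Finset.mem_Ico.mp hm).1; omega))
  rw [h1, h2, Finset.sum_const, add_zero, Nat.card_Ico, Nat.sub_zero, nsmul_eq_mul]

lemma card_filter_lt {d k : ℕ} (hkd : k ≤ d) :
    (Finset.filter (fun i : Fin d => (i : ℕ) < k) Finset.univ).card = k := by
  have := sum_if_lt_const (d := d) hkd (1 : ℝ)
  rw [← Finset.sum_filter, Finset.sum_const, nsmul_eq_mul, mul_one, mul_one] at this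
  exact_mod_cast this

lemma sum_mul_le_topk {d : ℕ} (p c : Fin d → ℝ) (k : ℕ) (hkd : k ≤ d)
    (hc0 : ∀ j, 0 ≤ c j) (hc1 : ∀ j, c j ≤ 1) (hcs : ∑ j, c j = k) :
    ∑ j, c j * p j ≤ ∑ i : Fin d, if (i : ℕ) < k then descSort p i else 0 := by
  rcases Nat.eq_zero_or_pos k with hk0 | hkpos
  · subst hk0
    have hc : ∀ j ∈ Finset.univ, c j = 0 := by
      intro j _
      have := (Finset.sum_eq_zero_iff_of_nonneg (fun j _ => hc0 j)).mp (by simpa using hcs)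
      exact this j (Finset.mem_univ j)
    have : ∑ j, c j * p j = 0 := Finset.sum_eq_zero (fun j hj => by rw [hc j hj, zero_mul])
    simp [this]
  · have hd : 0 < d := lt_of_lt_of_le hkpos hkd
    set k' : Fin d := ⟨k - 1, by omega⟩ with hk'
    set t : ℝ := descSort p k' with ht
    have step1 : ∑ j, c j * p j = (∑ j, c j * (p j - t)) + k * t := by
      rw [← hcs, Finset.sum_mul, ← Finset.sum_add_distrib]
      apply Finset.sum_congr rfl
      intro j _; ring
    have step2 : ∑ j, c j * (p j - t) ≤ ∑ j, max (p j - t) 0 := by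
      apply Finset.sum_le_sum
      intro j _
      rcases le_or_gt t (p j) with h | h
      · calc c j * (p j - t) ≤ 1 * (p j - t) :=
              mul_le_mul_of_nonneg_right (hc1 j) (by linarith)
          _ = p j - t := one_mul _
          _ ≤ max (p j - t) 0 := le_max_left _ _
      · calc c j * (p j - t) ≤ 0 := mul_nonpos_of_nonneg_of_nonpos (hc0 j) (by linarith)
          _ ≤ max (p j - t) 0 := le_max_right _ _
    have step3 : ∑ j, max (p j - t) 0 = ∑ i : Fin d, max (descSort p i - t) 0 :=
      (sum_comp_descSort p (fun z => max (z - t) 0)).symm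
    have step4 : ∑ i : Fin d, max (descSort p i - t) 0
        = ∑ i : Fin d, if (i : ℕ) < k then descSort p i - t else 0 := by
      apply Finset.sum_congr rfl
      intro i _
      by_cases hik : (i : ℕ) < k
      · rw [if_pos hik]
        have : t ≤ descSort p i := descSort_antitone p (by
          show i ≤ k'
          exact Fin.mk_le_mk.mpr (by omega) |>.trans_eq rfl)
        exact max_eq_left (by linarith)
      · rw [if_neg hik]
        have : descSort p i ≤ t := descSort_antitone p (by
          show k' ≤ i
          exact Fin.mk_le_mk.mpr (by omega) |>.trans_eq rfl)
        exact max_eq_right (by linarith)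
    have step5 : (∑ i : Fin d, if (i : ℕ) < k then descSort p i - t else 0)
        = (∑ i : Fin d, if (i : ℕ) < k then descSort p i else 0) - k * t := by
      rw [← sum_if_lt_const hkd t, ← Finset.sum_sub_distrib]
      apply Finset.sum_congr rfl
      intro i _
      by_cases hik : (i : ℕ) < k <;> simp [hik]
    linarith

lemma majorized_mulVec {d : ℕ} (B : Matrix (Fin d) (Fin d) ℝ) (hB : DoublyStochastic B)
    (p : Fin d → ℝ) : Majorized (fun j => ∑ m, B j m * p m) p := by
  obtain ⟨hB0, hBr, hBc⟩ := hB
  set r : Fin d → ℝ := fun j => ∑ m, B j m * p m with hr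
  have hsum : ∑ j, r j = ∑ m, p m := by
    simp only [hr]
    rw [Finset.sum_comm]
    exact Finset.sum_congr rfl (fun m _ => by rw [← Finset.sum_mul, hBc m, one_mul])
  constructor
  · intro k
    rcases le_or_gt k d with hkd | hdk
    · set e : Fin d → Fin d := fun i => Tuple.sort r (Fin.rev i) with he
      have hei : Function.Injective e :=
        (Tuple.sort r).injective.comp (fun a b h => Fin.rev_injective h)
      set F : Finset (Fin d) := Finset.filter (fun i : Fin d => (i : ℕ) < k) Finset.univ with hF
      set S : Finset (Fin d) := F.image e with hS
      have hcardS : S.card = k := by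
        rw [hS, Finset.card_image_of_injective _ hei, card_filter_lt hkd]
      have hLHS : (∑ i : Fin d, if (i : ℕ) < k then descSort r i else 0) = ∑ j ∈ S, r j := by
        rw [← Finset.sum_filter, ← hF, hS, Finset.sum_image (fun a _ b _ h => hei h)]
        rfl
      set c : Fin d → ℝ := fun m => ∑ j ∈ S, B j m with hc
      have hc0 : ∀ m, 0 ≤ c m := fun m => Finset.sum_nonneg (fun j _ => hB0 j m)
      have hc1 : ∀ m, c m ≤ 1 := by
        intro m
        rw [hc]
        calc ∑ j ∈ S, B j m ≤ ∑ j, B j m :=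
            Finset.sum_le_sum_of_subset_of_nonneg (Finset.subset_univ S)
              (fun j _ _ => hB0 j m)
          _ = 1 := hBc m
      have hcs : ∑ m, c m = k := by
        rw [hc, Finset.sum_comm]
        rw [Finset.sum_congr rfl (fun j _ => hBr j)]
        simp [hcardS]
      have hSr : ∑ j ∈ S, r j = ∑ m, c m * p m := by
        simp only [hr, hc, Finset.sum_mul]
        rw [Finset.sum_comm]
      rw [hLHS, hSr]
      exact sum_mul_le_topk p c k hkd hc0 hc1 hcs
    · have hall : ∀ (x : Fin d → ℝ),
          (∑ i : Fin d, if (i : ℕ) < k then descSort x i else 0) = ∑ i, x i := by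
        intro x
        rw [Finset.sum_congr rfl (fun i _ => if_pos (lt_of_lt_of_le i.isLt (le_of_lt hdk)))]
        exact sum_descSort x
      rw [hall, hall, hsum]
  · exact hsum

end AuxMajorization

section AuxSpectral

open Polynomial

lemma det_conj_diag {d : ℕ} {U : Matrix (Fin d) (Fin d) ℂ}
    (hU : U ∈ Matrix.unitaryGroup (Fin d) ℂ) (c : Fin d → ℝ) (t : ℂ) :
    ((t • (1 : Matrix (Fin d) (Fin d) ℂ)) - U * diagonal (fun i => (c i : ℂ)) * Uᴴ).det
      = ∏ i, (t - (c i : ℂ)) := by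
  have hUU : U * Uᴴ = 1 := by
    have := Matrix.mem_unitaryGroup_iff.mp hU
    rwa [Matrix.star_eq_conjTranspose] at this
  have h1 : t • (1 : Matrix (Fin d) (Fin d) ℂ) = U * (t • 1) * Uᴴ := by
    rw [Matrix.mul_smul, Matrix.mul_one, Matrix.smul_mul, hUU]
  rw [h1, ← Matrix.sub_mul, ← Matrix.mul_sub, det_mul, det_mul, mul_comm (U.det), mul_assoc,
    ← det_mul, hUU, det_one, mul_one]
  have h2 : t • (1 : Matrix (Fin d) (Fin d) ℂ) - diagonal (fun i => (c i : ℂ))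
      = diagonal (fun i => t - (c i : ℂ)) := by
    ext i j
    by_cases hij : i = j
    · subst hij; simp
    · simp [hij, Matrix.one_apply_ne hij, diagonal_apply_ne _ hij]
  rw [h2, det_diagonal]

lemma eigen_perm_of_unitary_conj {d : ℕ} {A : Matrix (Fin d) (Fin d) ℂ} (hA : A.IsHermitian)
    {U : Matrix (Fin d) (Fin d) ℂ} (hU : U ∈ Matrix.unitaryGroup (Fin d) ℂ) (c : Fin d → ℝ)
    (h : A = U * diagonal (fun i => (c i : ℂ)) * Uᴴ) :
    (List.ofFn hA.eigenvalues).Perm (List.ofFn c) := by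
  set pol : (Fin d → ℝ) → ℂ[X] :=
    fun a => (((List.ofFn a : Multiset ℝ)).map (fun r : ℝ => X - C (r : ℂ))).prod with hpol
  have heval : ∀ (a : Fin d → ℝ) (t : ℂ), (pol a).eval t = ∏ i, (t - (a i : ℂ)) := by
    intro a t
    rw [hpol]
    simp only [eval_multiset_prod, Multiset.map_map]
    have : ((List.ofFn a : Multiset ℝ)).map
          ((fun q : ℂ[X] => q.eval t) ∘ (fun r : ℝ => X - C (r : ℂ)))
        = ((List.ofFn a : Multiset ℝ)).map (fun r : ℝ => t - (r : ℂ)) := by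
      apply Multiset.map_congr rfl
      intro r _
      simp
    rw [this, ← Fin.univ_val_map, Multiset.map_map, ← Finset.prod_eq_multiset_prod]
    rfl
  have hspec := hA.spectral_theorem
  rw [Unitary.conjStarAlgAut_apply, Matrix.star_eq_conjTranspose] at hspec
  have hdet : ∀ t : ℂ, (pol hA.eigenvalues).eval t = (pol c).eval t := by
    intro t
    rw [heval, heval, ← det_conj_diag hU c t, ← h,
      ← det_conj_diag (hA.eigenvectorUnitary).2 hA.eigenvalues t]
    congr 2
    exact hspec.symm
  have hpq : pol hA.eigenvalues = pol c := Polynomial.funext hdet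
  have hroots := congrArg Polynomial.roots hpq
  rw [hpol] at hroots
  simp only [show ∀ a : Fin d → ℝ, ((List.ofFn a : Multiset ℝ)).map (fun r : ℝ => X - C (r : ℂ))
      = (((List.ofFn a : Multiset ℝ)).map (fun r : ℝ => (r : ℂ))).map (fun z : ℂ => X - C z) from
      fun a => by rw [Multiset.map_map]; rfl] at hroots
  rw [roots_multiset_prod_X_sub_C, roots_multiset_prod_X_sub_C] at hroots
  have := Multiset.map_injective (f := fun r : ℝ => (r : ℂ)) Complex.ofReal_injective hroots
  exact Multiset.coe_eq_coe.mp this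

lemma exists_unit_vec_of_rank_one {d : ℕ} {P : Matrix (Fin d) (Fin d) ℂ}
    (hH : P.IsHermitian) (hI : P * P = P) (hr : P.rank = 1) :
    ∃ v : Fin d → ℂ, P = vecMulVec v (star v) ∧ star v ⬝ᵥ v = 1 := by
  have hspec := hH.spectral_theorem
  rw [Unitary.conjStarAlgAut_apply, Matrix.star_eq_conjTranspose] at hspec
  set U : Matrix (Fin d) (Fin d) ℂ := (hH.eigenvectorUnitary : Matrix (Fin d) (Fin d) ℂ)
    with hUdef
  have hUU : U * Uᴴ = 1 := by
    have := Matrix.mem_unitaryGroup_iff.mp hH.eigenvectorUnitary.2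
    rwa [Matrix.star_eq_conjTranspose] at this
  have hUU' : Uᴴ * U = 1 := by
    have := Matrix.mem_unitaryGroup_iff'.mp hH.eigenvectorUnitary.2
    rwa [Matrix.star_eq_conjTranspose] at this
  set e := hH.eigenvalues with hedef
  have hdiag : Uᴴ * P * U = diagonal (RCLike.ofReal ∘ e) := by
    have := hH.conjStarAlgAut_star_eigenvectorUnitary
    rwa [Unitary.conjStarAlgAut_star_apply, Matrix.star_eq_conjTranspose] at this
  have hidem : ∀ i, e i = 0 ∨ e i = 1 := by
    intro i
    have h2 : (Uᴴ * P * U) * (Uᴴ * P * U) = Uᴴ * P * U := by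
      calc (Uᴴ * P * U) * (Uᴴ * P * U) = Uᴴ * P * (U * Uᴴ) * P * U := by
            simp only [Matrix.mul_assoc]
        _ = Uᴴ * (P * P) * U := by rw [hUU]; simp only [Matrix.mul_assoc, Matrix.mul_one]
        _ = Uᴴ * P * U := by rw [hI, Matrix.mul_assoc]
    rw [hdiag, diagonal_mul_diagonal] at h2
    have h3 := congrFun (congrFun h2 i) i
    simp only [diagonal_apply_eq, Function.comp_apply] at h3
    have h4 : (e i : ℂ) * (e i : ℂ) = (e i : ℂ) := h3
    have h5 : e i * e i = e i := by exact_mod_cast h4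
    have h6 : e i * (e i - 1) = 0 := by nlinarith [h5]
    rcases mul_eq_zero.mp h6 with h | h
    · exact Or.inl h
    · exact Or.inr (by linarith)
  have hcard : Fintype.card {i // e i ≠ 0} = 1 := by
    rw [← hH.rank_eq_card_non_zero_eigs]
    exact hr
  obtain ⟨⟨i₀, hi₀⟩, huniq⟩ := Fintype.card_eq_one_iff.mp hcard
  have he : ∀ i, (e i : ℂ) = if i = i₀ then 1 else 0 := by
    intro i
    by_cases hi : i = i₀
    · subst hi
      rcases hidem i with h | h
      · exact absurd h hi₀
      · simp [h]
    · rw [if_neg hi]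
      by_cases h0 : e i = 0
      · simp [h0]
      · exact absurd (congrArg Subtype.val (huniq ⟨i, h0⟩)) hi
  refine ⟨fun a => U a i₀, ?_, ?_⟩
  · ext a b
    rw [hspec]
    rw [Matrix.mul_apply, vecMulVec_apply]
    have : ∀ j, (U * diagonal ((RCLike.ofReal ∘ e) : Fin d → ℂ)) a j * Uᴴ j b
        = (if j = i₀ then U a i₀ * (star fun a => U a i₀) b else 0) := by
      intro j
      rw [Matrix.mul_diagonal]
      by_cases hj : j = i₀
      · subst hj
        rw [if_pos rfl]
        have h1 : (RCLike.ofReal ∘ e) j = (1 : ℂ) := by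
          have h2 := he j
          rw [if_pos rfl] at h2
          simpa using h2
        rw [h1, mul_one]
        simp [Matrix.conjTranspose_apply]
      · rw [if_neg hj]
        have : (RCLike.ofReal ∘ e) j = (0 : ℂ) := by simpa [hj] using he j
        rw [this, mul_zero, zero_mul]
    rw [Finset.sum_congr rfl (fun j _ => this j), Finset.sum_ite_eq' Finset.univ i₀ _]
    simp
  · have := congrFun (congrFun hUU' i₀) i₀
    rw [Matrix.mul_apply] at this
    simp only [Matrix.one_apply_eq] at this
    rw [← this]
    apply Finset.sum_congr rfl
    intro a _
    simp [conjTranspose_apply, dotProduct]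

lemma dot_eq_zero_of_proj_mul {d : ℕ} {v w : Fin d → ℂ}
    (h : vecMulVec v (star v) * vecMulVec w (star w) = 0) : star v ⬝ᵥ w = 0 := by
  have h1 : (vecMulVec v (star v) * vecMulVec w (star w)).trace = 0 := by rw [h, trace_zero]
  have h2 : (vecMulVec v (star v) * vecMulVec w (star w)).trace
      = (star v ⬝ᵥ w) * (star w ⬝ᵥ v) := by
    rw [Matrix.trace]
    simp only [Matrix.diag_apply, Matrix.mul_apply, vecMulVec_apply, Pi.star_apply, dotProduct,
      Finset.sum_mul, Finset.mul_sum]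
    apply Finset.sum_congr rfl
    intro c _
    apply Finset.sum_congr rfl
    intro a _
    ring
  rw [h2] at h1
  rcases mul_eq_zero.mp h1 with h | h
  · exact h
  · have : star (star w ⬝ᵥ v) = 0 := by rw [h, star_zero]
    rwa [star_dotProduct, star_star] at this

lemma trace_vecMulVec' {d : ℕ} (w u : Fin d → ℂ) : (vecMulVec w u).trace = u ⬝ᵥ w := by
  simp [Matrix.trace, Matrix.diag, vecMulVec_apply, dotProduct, mul_comm]

lemma sum_smul_proj_eq {d : ℕ} (v : Fin d → Fin d → ℂ) (c : Fin d → ℝ) :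
    (∑ j, (c j : ℂ) • vecMulVec (v j) (star (v j)))
      = (Matrix.of fun a i => v i a) * diagonal (fun i => (c i : ℂ))
        * (Matrix.of fun a i => v i a)ᴴ := by
  ext a b
  rw [Matrix.mul_apply, Matrix.sum_apply]
  apply Finset.sum_congr rfl
  intro j _
  rw [Matrix.mul_diagonal, Matrix.smul_apply, vecMulVec_apply, conjTranspose_apply]
  simp only [Matrix.of_apply, Pi.star_apply, smul_eq_mul]
  ring

lemma mem_unitary_of_onb {d : ℕ} {v : Fin d → Fin d → ℂ}
    (h : ∀ i j, star (v i) ⬝ᵥ v j = if i = j then 1 else 0) :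
    (Matrix.of fun a i => v i a) ∈ Matrix.unitaryGroup (Fin d) ℂ := by
  rw [Matrix.mem_unitaryGroup_iff', Matrix.star_eq_conjTranspose]
  ext i j
  rw [Matrix.mul_apply, Matrix.one_apply, ← h i j]
  apply Finset.sum_congr rfl
  intro a _
  rw [conjTranspose_apply]
  simp [dotProduct]

end AuxSpectral

/-- the eigenvalue vector of the coarse-grained state under a
classically post-processed measurement is majorized by the eigenvalue vector of
the coarse-grained state under the original fine-grained measurement. -/
theorem cgState_eigenvalues_majorized {d n : ℕ} (ρ : Matrix (Fin d) (Fin d) ℂ)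
    (hρ : ρ.PosSemidef) (hρtr : ρ.trace = 1)
    (P : Fin d → Matrix (Fin d) (Fin d) ℂ) (hP : FineGrained P)
    (D : Matrix (Fin n) (Fin d) ℝ) (hD : ColStochastic D)
    (Q : Fin n → Matrix (Fin d) (Fin d) ℂ)
    (hQ : ∀ i, Q i = ∑ j, (D i j : ℂ) • P j)
    (hQ0 : ∀ i, Q i ≠ 0)
    (hcgP : (cgState ρ P).IsHermitian) (hcgQ : (cgState ρ Q).IsHermitian) :
    Majorized hcgQ.eigenvalues hcgP.eigenvalues := by
  classical
  obtain ⟨hPh, hPo, hPsum, hPrank⟩ := hP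
  obtain ⟨hD0, hDc⟩ := hD
  -- extract unit vectors
  have hex : ∀ j, ∃ w : Fin d → ℂ, P j = vecMulVec w (star w) ∧ star w ⬝ᵥ w = 1 := by
    intro j
    refine exists_unit_vec_of_rank_one (hPh j) ?_ (hPrank j)
    simpa using hPo j j
  choose v hv1 hv2 using hex
  have honb : ∀ i j, star (v i) ⬝ᵥ v j = if i = j then 1 else 0 := by
    intro i j
    by_cases hij : i = j
    · subst hij; rw [if_pos rfl]; exact hv2 i
    · rw [if_neg hij]
      apply dot_eq_zero_of_proj_mul
      rw [← hv1 i, ← hv1 j]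
      simpa [hij] using hPo i j
  set U : Matrix (Fin d) (Fin d) ℂ := Matrix.of fun a i => v i a with hU
  have hUmem : U ∈ Matrix.unitaryGroup (Fin d) ℂ := mem_unitary_of_onb honb
  -- traces
  have htrP : ∀ j, (P j).trace = 1 := by
    intro j
    rw [hv1 j, trace_vecMulVec', hv2 j]
  set pr : Fin d → ℝ := fun j => ((ρ * P j).trace).re with hpr
  have htrρP : ∀ j, (ρ * P j).trace = (pr j : ℂ) := by
    intro j
    have h1 : star ((ρ * P j).trace) = (ρ * P j).trace := by
      rw [← Matrix.trace_conjTranspose, Matrix.conjTranspose_mul, (hPh j).eq, hρ.1.eq]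
      exact Matrix.trace_mul_comm _ _
    have him : ((ρ * P j).trace).im = 0 := by
      have := congrArg Complex.im h1
      simp only [Complex.star_def, Complex.conj_im] at this
      linarith
    apply Complex.ext
    · simp [hpr]
    · simp [him]
  -- representation of cgState ρ P
  have hrepP : cgState ρ P = U * diagonal (fun i => (pr i : ℂ)) * Uᴴ := by
    rw [cgState, Finset.sum_congr rfl (fun i _ => by
      rw [htrP i, htrρP i, div_one, hv1 i] :
      ∀ i ∈ Finset.univ, (((ρ * P i).trace) / ((P i).trace)) • P i
        = ((pr i : ℂ)) • vecMulVec (v i) (star (v i)))]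
    exact sum_smul_proj_eq v pr
  have hpermP := eigen_perm_of_unitary_conj hcgP hUmem pr hrepP
  -- Q side
  set t : Fin n → ℝ := fun i => ∑ j, D i j with htdef
  have ht0 : ∀ i, 0 < t i := by
    intro i
    rcases lt_or_eq_of_le (Finset.sum_nonneg fun j _ => hD0 i j) with h | h
    · exact h
    · exfalso
      apply hQ0 i
      have hz := (Finset.sum_eq_zero_iff_of_nonneg fun j _ => hD0 i j).mp h.symm
      rw [hQ i]
      apply Finset.sum_eq_zero
      intro j hj
      rw [hz j hj]
      simp
  have htrQ : ∀ i, (Q i).trace = (t i : ℂ) := by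
    intro i
    rw [hQ i, trace_sum]
    simp only [trace_smul, htrP, smul_eq_mul, mul_one]
    rw [htdef]
    push_cast
    rfl
  set q : Fin n → ℝ := fun i => ∑ j, D i j * pr j with hqdef
  have htrρQ : ∀ i, (ρ * Q i).trace = (q i : ℂ) := by
    intro i
    rw [hQ i, Finset.mul_sum, trace_sum]
    simp only [Matrix.mul_smul, trace_smul, htrρP, smul_eq_mul]
    rw [hqdef]
    push_cast
    rfl
  set r : Fin d → ℝ := fun j => ∑ i, (q i / t i) * D i j with hrdef
  have hrepQ : cgState ρ Q = U * diagonal (fun j => (r j : ℂ)) * Uᴴ := by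
    rw [cgState]
    have h1 : ∀ i ∈ Finset.univ, (((ρ * Q i).trace) / ((Q i).trace)) • Q i
        = ∑ j, (((q i / t i) * D i j : ℝ) : ℂ) • vecMulVec (v j) (star (v j)) := by
      intro i _
      rw [htrρQ i, htrQ i, hQ i, Finset.smul_sum]
      apply Finset.sum_congr rfl
      intro j _
      rw [smul_smul, hv1 j]
      congr 1
      push_cast
      ring
    rw [Finset.sum_congr rfl h1, Finset.sum_comm]
    have h2 : ∀ j ∈ Finset.univ,
        (∑ i, (((q i / t i) * D i j : ℝ) : ℂ) • vecMulVec (v j) (star (v j)))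
          = ((r j : ℂ)) • vecMulVec (v j) (star (v j)) := by
      intro j _
      rw [← Finset.sum_smul]
      congr 1
      rw [hrdef]
      push_cast
      rfl
    rw [Finset.sum_congr rfl h2]
    exact sum_smul_proj_eq v r
  have hpermQ := eigen_perm_of_unitary_conj hcgQ hUmem r hrepQ
  -- the doubly stochastic matrix
  set B : Matrix (Fin d) (Fin d) ℝ := Matrix.of fun j m => ∑ i, D i j * D i m / t i with hBdef
  have hBds : DoublyStochastic B := by
    refine ⟨?_, ?_, ?_⟩
    · intro j m
      simp only [hBdef, Matrix.of_apply]
      exact Finset.sum_nonneg fun i _ =>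
        div_nonneg (mul_nonneg (hD0 i j) (hD0 i m)) (le_of_lt (ht0 i))
    · intro j
      have e1 : ∑ m, B j m = ∑ i, D i j * (∑ m, D i m) / t i := by
        simp only [hBdef, Matrix.of_apply]
        rw [Finset.sum_comm]
        exact Finset.sum_congr rfl fun i _ => by rw [Finset.mul_sum, Finset.sum_div]
      rw [e1]
      have e2 : ∀ i ∈ Finset.univ, D i j * (∑ m, D i m) / t i = D i j := by
        intro i _
        have hti : (∑ m : Fin d, D i m) = t i := rfl
        rw [hti, mul_div_assoc, div_self (ne_of_gt (ht0 i)), mul_one]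
      rw [Finset.sum_congr rfl e2]
      exact hDc j
    · intro m
      have e1 : ∑ j, B j m = ∑ i, (∑ j, D i j) * D i m / t i := by
        simp only [hBdef, Matrix.of_apply]
        rw [Finset.sum_comm]
        exact Finset.sum_congr rfl fun i _ => by rw [Finset.sum_mul, Finset.sum_div]
      rw [e1]
      have e2 : ∀ i ∈ Finset.univ, (∑ j, D i j) * D i m / t i = D i m := by
        intro i _
        have hti : (∑ j : Fin d, D i j) = t i := rfl
        rw [hti, mul_comm, mul_div_assoc, div_self (ne_of_gt (ht0 i)), mul_one]
      rw [Finset.sum_congr rfl e2]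
      exact hDc m
  have hrB : r = fun j => ∑ m, B j m * pr m := by
    funext j
    rw [hrdef]
    simp only [hBdef, Matrix.of_apply, hqdef, Finset.sum_mul, Finset.sum_div]
    rw [Finset.sum_comm]
    apply Finset.sum_congr rfl
    intro i _
    apply Finset.sum_congr rfl
    intro m _
    ring
  have hmaj : Majorized r pr := by
    rw [hrB]
    exact majorized_mulVec B hBds pr
  exact majorized_congr hpermQ.symm hpermP.symm hmaj
end

section
/- Let ρ be a quantum state on a d-dimensional Hilbert space with Hamiltonian H, and let M = {|k⟩⟨k|}_{k=1}^d be any fine-grained (rank-one projective) measurement. Then the observational ergotropy is bounded above by the ergotropy: R(ρ, M) ≤ R(ρ). Equivalently, the passive energy of the coarse-grained state satisfies E_pass(ρ_cg^M) ≥ E_pass(ρ). -/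
open Matrix ComplexOrder

section aux
variable {d : ℕ}

lemma my_vecMulVec_mul_vecMulVec (v w v' w' : Fin d → ℂ) :
    vecMulVec v w * vecMulVec v' w' = (w ⬝ᵥ v') • vecMulVec v w' := by
  ext i j
  simp only [Matrix.mul_apply, vecMulVec_apply, Matrix.smul_apply, smul_eq_mul, dotProduct,
    Finset.sum_mul]
  exact Finset.sum_congr rfl fun k _ => by ring

lemma my_vecMulVec_mul (v w : Fin d → ℂ) (ρ : Matrix (Fin d) (Fin d) ℂ) :
    vecMulVec v w * ρ = vecMulVec v (w ᵥ* ρ) := by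
  ext i j
  simp only [Matrix.mul_apply, vecMulVec_apply, vecMul, dotProduct, Finset.mul_sum]
  exact Finset.sum_congr rfl fun k _ => by ring

lemma my_exists_vecMulVec {P : Matrix (Fin d) (Fin d) ℂ} (h : P.rank = 1) :
    ∃ v w : Fin d → ℂ, P = vecMulVec v w := by
  rw [Matrix.rank] at h
  rw [finrank_eq_one_iff'] at h
  obtain ⟨v₀, hv₀ne, hv₀⟩ := h
  have hmem : ∀ j : Fin d, P *ᵥ Pi.single j 1 ∈ LinearMap.range P.mulVecLin :=
    fun j => ⟨Pi.single j 1, rfl⟩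
  refine ⟨v₀, fun j => Classical.choose (hv₀ ⟨P *ᵥ Pi.single j 1, hmem j⟩), ?_⟩
  ext i j
  have hspec := Classical.choose_spec (hv₀ ⟨P *ᵥ Pi.single j 1, hmem j⟩)
  have h2 := congrArg (fun x : LinearMap.range P.mulVecLin => (x : Fin d → ℂ) i) hspec
  simp only [Submodule.coe_smul, Pi.smul_apply, smul_eq_mul] at h2
  have hPv : (P *ᵥ Pi.single j 1) i = P i j := by
    simp [mulVec, dotProduct, Pi.single_apply, Finset.sum_ite_eq]
  rw [vecMulVec_apply, mul_comm]
  exact (h2.trans hPv).symm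

lemma my_trace_vecMulVec (v w : Fin d → ℂ) : (vecMulVec v w).trace = v ⬝ᵥ w := rfl

end aux

section aux2
variable {d : ℕ}

/-- facts about a rank-one projector -/
lemma my_proj_facts {P : Matrix (Fin d) (Fin d) ℂ} (hP : P * P = P) (hr : P.rank = 1) :
    P.trace = 1 ∧ ∀ ρ : Matrix (Fin d) (Fin d) ℂ, P * ρ * P = ((ρ * P).trace) • P := by
  obtain ⟨v, w, rfl⟩ := my_exists_vecMulVec hr
  have hne : vecMulVec v w ≠ 0 := by
    intro h0
    rw [h0, Matrix.rank_zero] at hr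
    exact one_ne_zero hr.symm
  have hvw : w ⬝ᵥ v = 1 := by
    rw [my_vecMulVec_mul_vecMulVec] at hP
    by_contra hne1
    have : (w ⬝ᵥ v - 1) • vecMulVec v w = 0 := by
      rw [sub_smul, one_smul, hP, sub_self]
    rcases smul_eq_zero.mp this with h | h
    · exact hne1 (by linear_combination (norm := ring_nf) h)
    · exact hne h
  constructor
  · rw [my_trace_vecMulVec, dotProduct_comm]; exact hvw
  · intro ρ
    rw [my_vecMulVec_mul, my_vecMulVec_mul_vecMulVec]
    congr 1
    -- (w ᵥ* ρ) ⬝ᵥ v = (ρ * vecMulVec v w).trace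
    simp only [Matrix.trace, Matrix.diag, Matrix.mul_apply, vecMulVec_apply, vecMul, dotProduct,
      Finset.sum_mul, Finset.mul_sum]
    rw [Finset.sum_comm]
    exact Finset.sum_congr rfl fun k _ => Finset.sum_congr rfl fun l _ => by ring

end aux2

section aux3
variable {d : ℕ}

lemma my_diag_re_nonneg {X : Matrix (Fin d) (Fin d) ℂ} (hX : X.PosSemidef) (i : Fin d) :
    0 ≤ (X i i).re := by
  have h := hX.re_dotProduct_nonneg (Pi.single i 1)
  simpa [dotProduct, mulVec, Pi.single_apply, Finset.sum_ite_eq] using h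

lemma my_diag_re_sum {X : Matrix (Fin d) (Fin d) ℂ} (htr : X.trace = 1) :
    ∑ k, (X k k).re = 1 := by
  have := congrArg Complex.re htr
  simpa [Matrix.trace, Matrix.diag, Complex.re_sum] using this

lemma my_diag_re_le_one {X : Matrix (Fin d) (Fin d) ℂ} (hX : X.PosSemidef)
    (htr : X.trace = 1) (i : Fin d) : (X i i).re ≤ 1 := by
  calc (X i i).re ≤ ∑ k, (X k k).re :=
        Finset.single_le_sum (fun k _ => my_diag_re_nonneg hX k) (Finset.mem_univ i)
    _ = 1 := my_diag_re_sum htr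

lemma my_entry_abs_le_one {X : Matrix (Fin d) (Fin d) ℂ} (hX : X.PosSemidef)
    (htr : X.trace = 1) (i j : Fin d) : ‖X i j‖ ≤ 1 := by
  by_cases hij : i = j
  · subst hij
    have him : (X i i).im = 0 := by
      have h1 := congrFun (congrFun hX.isHermitian i) i
      simp only [conjTranspose_apply, Matrix.star_apply] at h1
      have h2 := congrArg Complex.im h1
      simp only [Complex.star_def, Complex.conj_im] at h2
      linarith
    have hre : X i i = ((X i i).re : ℂ) := Complex.ext rfl (by simp [him])
    rw [hre, Complex.norm_real, Real.norm_eq_abs, abs_of_nonneg (my_diag_re_nonneg hX i)]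
    exact my_diag_re_le_one hX htr i
  · set a : ℝ := ‖X i j‖ with ha
    by_cases ha0 : a = 0
    · rw [ha0]; norm_num
    have hapos : 0 < a := lt_of_le_of_ne (norm_nonneg _) (Ne.symm ha0)
    set x : Fin d → ℂ := fun k => if k = i then X i j else if k = j then -(a : ℂ) else 0 with hx
    have hxz : ∀ k, k ≠ i → k ≠ j → x k = 0 := by
      intro k h1 h2; simp [hx, h1, h2]
    have hji : X j i = (starRingEnd ℂ) (X i j) := by
      have h1 := congrFun (congrFun hX.isHermitian i) j
      simp only [conjTranspose_apply, Matrix.star_apply, Complex.star_def] at h1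
      have h2 := congrArg (starRingEnd ℂ) h1
      rw [Complex.conj_conj] at h2
      exact h2
    have hconj : (starRingEnd ℂ) (X i j) * X i j = (a : ℂ) ^ 2 := by
      rw [mul_comm, Complex.mul_conj, Complex.normSq_eq_norm_sq]
      push_cast
      rfl
    have hout : star x ⬝ᵥ X *ᵥ x = star (x i) * (X *ᵥ x) i + star (x j) * (X *ᵥ x) j := by
      rw [dotProduct, ← Finset.sum_subset (Finset.subset_univ ({i, j} : Finset (Fin d)))
        (fun k _ hk => by
          simp only [Finset.mem_insert, Finset.mem_singleton, not_or] at hk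
          simp [hxz k hk.1 hk.2]),
        Finset.sum_pair hij]
      rfl
    have hin : ∀ k, (X *ᵥ x) k = X k i * x i + X k j * x j := by
      intro k
      show (∑ l, X k l * x l) = _
      rw [← Finset.sum_subset (Finset.subset_univ ({i, j} : Finset (Fin d)))
        (fun l _ hl => by
          simp only [Finset.mem_insert, Finset.mem_singleton, not_or] at hl
          simp [hxz l hl.1 hl.2]),
        Finset.sum_pair hij]
    have hxi : x i = X i j := by simp [hx]
    have hxj : x j = -(a : ℂ) := by simp [hx, Ne.symm hij]
    have hq : star x ⬝ᵥ X *ᵥ x = ((a ^ 2 : ℝ) : ℂ) * (X i i + X j j) - ((2 * a ^ 3 : ℝ) : ℂ) := by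
      rw [hout, hin i, hin j, hxi, hxj, hji]
      rw [show star (X i j) = (starRingEnd ℂ) (X i j) from rfl,
        show star (-(a : ℂ)) = -(a : ℂ) by simp [Complex.star_def, Complex.conj_ofReal]]
      push_cast
      linear_combination (X i i - 2 * (a : ℂ)) * hconj
    have h := hX.re_dotProduct_nonneg x
    rw [hq] at h
    simp only [RCLike.re_to_complex, Complex.sub_re, Complex.re_ofReal_mul, Complex.add_re, Complex.ofReal_re] at h
    have hpair : (X i i).re + (X j j).re ≤ 1 := by
      have hsub : ∑ k ∈ ({i, j} : Finset (Fin d)), (X k k).re ≤ ∑ k, (X k k).re :=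
        Finset.sum_le_sum_of_subset_of_nonneg (Finset.subset_univ _)
          (fun k _ _ => my_diag_re_nonneg hX k)
      rw [Finset.sum_pair hij] at hsub
      rw [my_diag_re_sum htr] at hsub
      exact hsub
    nlinarith [mul_pos hapos hapos, hapos]

end aux3

section aux4
variable {d : ℕ}

lemma my_reTrace_lower {H X : Matrix (Fin d) (Fin d) ℂ} (hX : X.PosSemidef)
    (htr : X.trace = 1) :
    -(∑ i, ∑ j, ‖H i j‖) ≤ ((H * X).trace).re := by
  have hexp : ((H * X).trace).re = ∑ i, ∑ j, (H i j * X j i).re := by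
    simp [Matrix.trace, Matrix.diag, Matrix.mul_apply, Complex.re_sum]
  rw [hexp, ← Finset.sum_neg_distrib]
  refine Finset.sum_le_sum fun i _ => ?_
  rw [← Finset.sum_neg_distrib]
  refine Finset.sum_le_sum fun j _ => ?_
  have h1 : |(H i j * X j i).re| ≤ ‖H i j * X j i‖ := Complex.abs_re_le_norm _
  have h2 : ‖H i j * X j i‖ ≤ ‖H i j‖ := by
    rw [norm_mul]
    calc ‖H i j‖ * ‖X j i‖ ≤ ‖H i j‖ * 1 :=
          mul_le_mul_of_nonneg_left (my_entry_abs_le_one hX htr j i) (norm_nonneg _)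
      _ = ‖H i j‖ := mul_one _
  have := neg_abs_le ((H i j * X j i).re)
  linarith

lemma my_unitary_conj_posSemidef {ρ : Matrix (Fin d) (Fin d) ℂ} (hρ : ρ.PosSemidef)
    (hρtr : ρ.trace = 1) (U : Matrix.unitaryGroup (Fin d) ℂ) :
    ((U : Matrix (Fin d) (Fin d) ℂ) * ρ * (U : Matrix (Fin d) (Fin d) ℂ)ᴴ).PosSemidef ∧
    ((U : Matrix (Fin d) (Fin d) ℂ) * ρ * (U : Matrix (Fin d) (Fin d) ℂ)ᴴ).trace = 1 := by
  refine ⟨hρ.mul_mul_conjTranspose_same _, ?_⟩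
  rw [Matrix.trace_mul_cycle]
  have hU : (U : Matrix (Fin d) (Fin d) ℂ)ᴴ * (U : Matrix (Fin d) (Fin d) ℂ) = 1 := by
    have := U.2
    rw [Matrix.mem_unitaryGroup_iff'] at this
    simpa [Matrix.star_eq_conjTranspose] using this
  rw [hU, one_mul, hρtr]

lemma my_bddBelow {ρ : Matrix (Fin d) (Fin d) ℂ} (H : Matrix (Fin d) (Fin d) ℂ)
    (hρ : ρ.PosSemidef) (hρtr : ρ.trace = 1) :
    BddBelow (Set.range fun U : Matrix.unitaryGroup (Fin d) ℂ =>
      ((H * ((U : Matrix (Fin d) (Fin d) ℂ) * ρ * ((U : Matrix (Fin d) (Fin d) ℂ))ᴴ)).trace).re) := by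
  refine ⟨-(∑ i, ∑ j, ‖H i j‖), ?_⟩
  rintro x ⟨U, rfl⟩
  obtain ⟨hpsd, htr⟩ := my_unitary_conj_posSemidef hρ hρtr U
  exact my_reTrace_lower hpsd htr

lemma my_Epass_le {ρ : Matrix (Fin d) (Fin d) ℂ} (H : Matrix (Fin d) (Fin d) ℂ)
    (hρ : ρ.PosSemidef) (hρtr : ρ.trace = 1) (W : Matrix.unitaryGroup (Fin d) ℂ) :
    Epass H ρ ≤ ((H * ((W : Matrix (Fin d) (Fin d) ℂ) * ρ * ((W : Matrix (Fin d) (Fin d) ℂ))ᴴ)).trace).re :=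
  ciInf_le (my_bddBelow H hρ hρtr) W

end aux4


section aux5
variable {d : ℕ}

def mySgn (b : Bool) : ℂ := if b then 1 else -1

lemma mySgn_mul_self (b : Bool) : mySgn b * mySgn b = 1 := by cases b <;> simp [mySgn]

lemma mySgn_star (b : Bool) : star (mySgn b) = mySgn b := by cases b <;> simp [mySgn]

lemma mySgn_sum : ∑ b : Bool, mySgn b = 0 := by simp [mySgn]

lemma my_sgn_sum (i j : Fin d) :
    ∑ ε : Fin d → Bool, mySgn (ε i) * mySgn (ε j) = if i = j then (2 ^ d : ℂ) else 0 := by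
  by_cases hij : i = j
  · subst hij
    rw [if_pos rfl, Finset.sum_congr rfl (fun ε _ => mySgn_mul_self (ε i)),
      Finset.sum_const, Finset.card_univ]
    simp [Fintype.card_fun]
  · rw [if_neg hij]
    have hrw : ∀ ε : Fin d → Bool, mySgn (ε i) * mySgn (ε j)
        = ∏ k, ((if k = i then mySgn (ε k) else 1) * (if k = j then mySgn (ε k) else 1)) := by
      intro ε
      rw [Finset.prod_mul_distrib, Finset.prod_ite_eq', Finset.prod_ite_eq']
      simp
    rw [Finset.sum_congr rfl (fun ε _ => hrw ε), ← Fintype.piFinset_univ,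
      Finset.sum_prod_piFinset Finset.univ
        (fun k b => (if k = i then mySgn b else 1) * (if k = j then mySgn b else 1))]
    refine Finset.prod_eq_zero (Finset.mem_univ i) ?_
    simp [hij, mySgn]

/-- sign unitary associated to `ε`. -/
noncomputable def myV (M : Fin d → Matrix (Fin d) (Fin d) ℂ) (ε : Fin d → Bool) :
    Matrix (Fin d) (Fin d) ℂ :=
  ∑ i, mySgn (ε i) • M i

lemma myV_herm {M : Fin d → Matrix (Fin d) (Fin d) ℂ} (hHerm : ∀ i, (M i).IsHermitian)
    (ε : Fin d → Bool) : (myV M ε)ᴴ = myV M ε := by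
  unfold myV
  rw [conjTranspose_sum]
  exact Finset.sum_congr rfl fun i _ => by
    rw [conjTranspose_smul, mySgn_star, (hHerm i).eq]

lemma myV_mul_self {M : Fin d → Matrix (Fin d) (Fin d) ℂ}
    (horth : ∀ i j, M i * M j = if i = j then M i else 0) (hsumM : ∑ i, M i = 1)
    (ε : Fin d → Bool) : myV M ε * myV M ε = 1 := by
  unfold myV
  rw [Finset.sum_mul]
  have h1 : ∀ i, (mySgn (ε i) • M i) * (∑ j, mySgn (ε j) • M j) = mySgn (ε i) • mySgn (ε i) • M i := by
    intro i
    rw [Finset.mul_sum]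
    have h2 : ∀ j, (mySgn (ε i) • M i) * (mySgn (ε j) • M j)
        = (mySgn (ε i) * mySgn (ε j)) • (if i = j then M i else 0) := by
      intro j
      rw [smul_mul_assoc, mul_smul_comm, smul_smul, horth]
    rw [Finset.sum_congr rfl fun j _ => h2 j]
    simp only [smul_ite, smul_zero, Finset.sum_ite_eq, Finset.mem_univ, if_true, smul_smul]
  rw [Finset.sum_congr rfl fun i _ => h1 i]
  rw [Finset.sum_congr rfl fun i _ => by rw [smul_smul, mySgn_mul_self, one_smul]]
  exact hsumM

lemma myV_unitary {M : Fin d → Matrix (Fin d) (Fin d) ℂ} (hHerm : ∀ i, (M i).IsHermitian)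
    (horth : ∀ i j, M i * M j = if i = j then M i else 0) (hsumM : ∑ i, M i = 1)
    (ε : Fin d → Bool) : myV M ε ∈ Matrix.unitaryGroup (Fin d) ℂ := by
  rw [Matrix.mem_unitaryGroup_iff, Matrix.star_eq_conjTranspose, myV_herm hHerm]
  exact myV_mul_self horth hsumM ε

lemma my_avg {M : Fin d → Matrix (Fin d) (Fin d) ℂ} (ρ : Matrix (Fin d) (Fin d) ℂ) :
    ∑ ε : Fin d → Bool, myV M ε * ρ * myV M ε = (2 ^ d : ℂ) • ∑ i, M i * ρ * M i := by
  have hexp : ∀ ε : Fin d → Bool, myV M ε * ρ * myV M ε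
      = ∑ i, ∑ j, (mySgn (ε i) * mySgn (ε j)) • (M i * ρ * M j) := by
    intro ε
    unfold myV
    simp only [Finset.sum_mul, Finset.mul_sum, smul_mul_assoc, mul_smul_comm, smul_smul,
      Finset.smul_sum]
    rw [Finset.sum_comm]
    exact Finset.sum_congr rfl fun i _ => Finset.sum_congr rfl fun j _ => by rw [mul_comm]
  rw [Finset.sum_congr rfl fun ε _ => hexp ε]
  have hc : (∑ ε : Fin d → Bool, ∑ i : Fin d, ∑ j : Fin d,
        (mySgn (ε i) * mySgn (ε j)) • (M i * ρ * M j))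
      = ∑ i : Fin d, ∑ ε : Fin d → Bool, ∑ j : Fin d,
        (mySgn (ε i) * mySgn (ε j)) • (M i * ρ * M j) := Finset.sum_comm
  rw [hc]
  have hswap : ∀ i : Fin d, (∑ ε : Fin d → Bool, ∑ j, (mySgn (ε i) * mySgn (ε j)) • (M i * ρ * M j))
      = (2 ^ d : ℂ) • (M i * ρ * M i) := by
    intro i
    have hc2 : (∑ ε : Fin d → Bool, ∑ j : Fin d, (mySgn (ε i) * mySgn (ε j)) • (M i * ρ * M j))
        = ∑ j : Fin d, ∑ ε : Fin d → Bool, (mySgn (ε i) * mySgn (ε j)) • (M i * ρ * M j) :=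
      Finset.sum_comm
    rw [hc2]
    have hj : ∀ j : Fin d, (∑ ε : Fin d → Bool, (mySgn (ε i) * mySgn (ε j)) • (M i * ρ * M j))
        = (if i = j then (2 ^ d : ℂ) else 0) • (M i * ρ * M j) := by
      intro j
      rw [← Finset.sum_smul, my_sgn_sum]
    rw [Finset.sum_congr rfl fun j _ => hj j]
    simp only [ite_smul, zero_smul, Finset.sum_ite_eq, Finset.mem_univ, if_true]
  rw [Finset.sum_congr rfl fun i _ => hswap i, ← Finset.smul_sum]

end aux5

/-- for any fine-grained measurement `M`, the observational ergotropy
is at most the ergotropy; equivalently the passive energy of the coarse-grained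
state is at least that of `ρ`. -/
theorem obsErg_fineGrained_le_ergotropy {d : ℕ} (ρ H : Matrix (Fin d) (Fin d) ℂ)
    (hρ : ρ.PosSemidef) (hρtr : ρ.trace = 1) (hH : H.IsHermitian)
    (M : Fin d → Matrix (Fin d) (Fin d) ℂ) (hM : FineGrained M) :
    obsErg ρ H M ≤ ((H * ρ).trace).re - Epass H ρ ∧
    Epass H ρ ≤ Epass H (cgState ρ M) := by
  obtain ⟨hHerm, horth, hsumM, hrank⟩ := hM
  have hProj : ∀ i, M i * M i = M i := fun i => by simpa using horth i i
  have hfacts := fun i => my_proj_facts (hProj i) (hrank i)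
  have hcg : cgState ρ M = ∑ i, M i * ρ * M i := by
    unfold cgState
    refine Finset.sum_congr rfl fun i _ => ?_
    rw [(hfacts i).1, div_one]
    exact ((hfacts i).2 ρ).symm
  have hkey : Epass H ρ ≤ Epass H (cgState ρ M) := by
    rw [hcg]
    unfold Epass
    refine le_ciInf fun U => ?_
    have h2dC : ((2 : ℂ) ^ d) ≠ 0 := pow_ne_zero _ two_ne_zero
    have hW : ∀ ε : Fin d → Bool,
        (U : Matrix (Fin d) (Fin d) ℂ) * myV M ε ∈ Matrix.unitaryGroup (Fin d) ℂ :=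
      fun ε => mul_mem U.2 (myV_unitary hHerm horth hsumM ε)
    set W : (Fin d → Bool) → Matrix.unitaryGroup (Fin d) ℂ := fun ε => ⟨_, hW ε⟩ with hWdef
    have hterm : ∀ ε : Fin d → Bool,
        (U : Matrix (Fin d) (Fin d) ℂ) * (myV M ε * ρ * myV M ε) * (U : Matrix (Fin d) (Fin d) ℂ)ᴴ
        = (W ε : Matrix (Fin d) (Fin d) ℂ) * ρ * ((W ε : Matrix (Fin d) (Fin d) ℂ))ᴴ := by
      intro ε
      show _ = ((U : Matrix (Fin d) (Fin d) ℂ) * myV M ε) * ρ *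
        ((U : Matrix (Fin d) (Fin d) ℂ) * myV M ε)ᴴ
      rw [conjTranspose_mul, myV_herm hHerm]
      simp only [Matrix.mul_assoc]
    have hσ : (∑ i, M i * ρ * M i)
        = ((2 : ℂ) ^ d)⁻¹ • ∑ ε : Fin d → Bool, myV M ε * ρ * myV M ε := by
      rw [my_avg (M := M) ρ, smul_smul, inv_mul_cancel₀ h2dC, one_smul]
    have hUcg : (U : Matrix (Fin d) (Fin d) ℂ) * (∑ i, M i * ρ * M i) *
          (U : Matrix (Fin d) (Fin d) ℂ)ᴴ
        = ((2 : ℂ) ^ d)⁻¹ • ∑ ε : Fin d → Bool,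
            (W ε : Matrix (Fin d) (Fin d) ℂ) * ρ * ((W ε : Matrix (Fin d) (Fin d) ℂ))ᴴ := by
      rw [hσ, mul_smul_comm, smul_mul_assoc, Finset.mul_sum, Finset.sum_mul]
      exact congrArg _ (Finset.sum_congr rfl fun ε _ => hterm ε)
    rw [hUcg]
    have hcast : ((2 : ℂ) ^ d)⁻¹ = ((((2 : ℝ) ^ d)⁻¹ : ℝ) : ℂ) := by push_cast; ring
    have hre : ((H * (((2 : ℂ) ^ d)⁻¹ • ∑ ε : Fin d → Bool,
            (W ε : Matrix (Fin d) (Fin d) ℂ) * ρ * ((W ε : Matrix (Fin d) (Fin d) ℂ))ᴴ)).trace).re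
        = ((2 : ℝ) ^ d)⁻¹ * ∑ ε : Fin d → Bool,
            ((H * ((W ε : Matrix (Fin d) (Fin d) ℂ) * ρ *
              ((W ε : Matrix (Fin d) (Fin d) ℂ))ᴴ)).trace).re := by
      rw [mul_smul_comm, trace_smul, smul_eq_mul, Finset.mul_sum, trace_sum, hcast,
        Complex.re_ofReal_mul, Complex.re_sum]
    rw [hre]
    have hsum : (2 ^ d : ℝ) * Epass H ρ ≤ ∑ ε : Fin d → Bool,
        ((H * ((W ε : Matrix (Fin d) (Fin d) ℂ) * ρ *
          ((W ε : Matrix (Fin d) (Fin d) ℂ))ᴴ)).trace).re := by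
      calc (2 ^ d : ℝ) * Epass H ρ = ∑ _ε : Fin d → Bool, Epass H ρ := by
            rw [Finset.sum_const, Finset.card_univ, Fintype.card_fun, nsmul_eq_mul]
            norm_num
        _ ≤ _ := Finset.sum_le_sum fun ε _ => my_Epass_le H hρ hρtr (W ε)
    have h2dR : (0:ℝ) < 2 ^ d := by positivity
    calc Epass H ρ = ((2 : ℝ) ^ d)⁻¹ * ((2 ^ d : ℝ) * Epass H ρ) := by field_simp
      _ ≤ _ := mul_le_mul_of_nonneg_left hsum (by positivity)
  refine ⟨?_, hkey⟩
  unfold obsErg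
  exact sub_le_sub_left hkey _
end

section
/- Let P = {P_j}_{j=1}^d be a fine-grained measurement (so Tr(P_j) = 1 for every j), let D be an n×d column-stochastic matrix, and suppose every row of D is nonzero (so each post-processed element Q_i = Σ_j D_{ij} P_j is nonzero). Define q(j|i) := D_{ij} / Σ_k D_{ik} and B_{j,m} := Σ_{i=1}^n D_{im} q(j|i). Then the d×d matrix B is doubly stochastic: B_{j,m} ≥ 0, Σ_j B_{j,m} = 1 for every m, and Σ_m B_{j,m} = 1 for every j. Moreover, the eigenvalue vector μ of the coarse-grained state ρ_cg^Q satisfies μ = B p, where p_j = Tr(ρ P_j) is the eigenvalue vector of ρ_cg^P. -/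
open Matrix ComplexOrder

lemma trace_one_of_rankone {d : ℕ} (A : Matrix (Fin d) (Fin d) ℂ)
    (hH : A.IsHermitian) (hid : A * A = A) (hr : A.rank = 1) : A.trace = 1 := by
  have hU1 : star (hH.eigenvectorUnitary : Matrix (Fin d) (Fin d) ℂ) *
      (hH.eigenvectorUnitary : Matrix (Fin d) (Fin d) ℂ) = 1 :=
    Matrix.mem_unitaryGroup_iff'.mp hH.eigenvectorUnitary.2
  have hU2 : (hH.eigenvectorUnitary : Matrix (Fin d) (Fin d) ℂ) *
      star (hH.eigenvectorUnitary : Matrix (Fin d) (Fin d) ℂ) = 1 :=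
    Matrix.mem_unitaryGroup_iff.mp hH.eigenvectorUnitary.2
  set U : Matrix (Fin d) (Fin d) ℂ := (hH.eigenvectorUnitary : Matrix (Fin d) (Fin d) ℂ)
  have hdiag : star U * A * U = diagonal ((RCLike.ofReal : ℝ → ℂ) ∘ hH.eigenvalues) := by
    have h := hH.conjStarAlgAut_star_eigenvectorUnitary
    rw [Unitary.conjStarAlgAut_apply] at h
    simpa [U] using h
  have hidem2 : diagonal ((RCLike.ofReal : ℝ → ℂ) ∘ hH.eigenvalues) *
      diagonal ((RCLike.ofReal : ℝ → ℂ) ∘ hH.eigenvalues) =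
      diagonal ((RCLike.ofReal : ℝ → ℂ) ∘ hH.eigenvalues) := by
    rw [← hdiag]
    calc (star U * A * U) * (star U * A * U)
        = star U * (A * ((U * star U) * (A * U))) := by simp only [mul_assoc]
      _ = star U * (A * (A * U)) := by rw [hU2, one_mul]
      _ = star U * (A * U) := by rw [← mul_assoc A A U, hid]
      _ = star U * A * U := by rw [mul_assoc]
  rw [diagonal_mul_diagonal] at hidem2
  have h01 : ∀ i, hH.eigenvalues i = 0 ∨ hH.eigenvalues i = 1 := by
    intro i
    have h2 := congrFun (congrFun hidem2 i) i
    simp only [diagonal_apply_eq, Pi.mul_apply, Function.comp_apply] at h2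
    have h3 : hH.eigenvalues i * hH.eigenvalues i = hH.eigenvalues i := by exact_mod_cast h2
    have h4 : hH.eigenvalues i * (hH.eigenvalues i - 1) = 0 := by ring_nf; linarith [h3]
    rcases mul_eq_zero.mp h4 with h | h
    · exact Or.inl h
    · exact Or.inr (by linarith)
  have hcard : Fintype.card {i // hH.eigenvalues i ≠ 0} = 1 := by
    rw [← hH.rank_eq_card_non_zero_eigs]; exact hr
  rw [Fintype.card_subtype] at hcard
  have hsum : ∑ i, hH.eigenvalues i = 1 := by
    classical
    rw [← Finset.sum_filter_ne_zero]
    have hc : ∀ i ∈ Finset.univ.filter (fun i => hH.eigenvalues i ≠ 0),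
        hH.eigenvalues i = 1 := by
      intro i hi
      rcases h01 i with h | h
      · exact absurd h (Finset.mem_filter.mp hi).2
      · exact h
    rw [Finset.sum_congr rfl hc, Finset.sum_const, nsmul_eq_mul, mul_one]
    exact_mod_cast hcard
  have htr : A.trace = ∑ i, ((hH.eigenvalues i : ℝ) : ℂ) := by
    conv_lhs => rw [hH.spectral_theorem, Unitary.conjStarAlgAut_apply]
    rw [trace_mul_comm, ← mul_assoc, hU1, one_mul, trace_diagonal]
    rfl
  rw [htr, ← Complex.ofReal_sum, hsum, Complex.ofReal_one]

/-- the matrix `B` built from the post-processing `D` is doubly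
stochastic, and it maps the eigenvalue vector `p` of `ρ_cg^P` to the eigenvalue
vector `μ = B p` of `ρ_cg^Q`. -/
theorem cgState_bistochastic_relation {d n : ℕ} (ρ : Matrix (Fin d) (Fin d) ℂ)
    (hρ : ρ.PosSemidef) (hρtr : ρ.trace = 1)
    (P : Fin d → Matrix (Fin d) (Fin d) ℂ) (hP : FineGrained P)
    (D : Matrix (Fin n) (Fin d) ℝ) (hD : ColStochastic D)
    (hrow : ∀ i, ∃ j, D i j ≠ 0)
    (Q : Fin n → Matrix (Fin d) (Fin d) ℂ)
    (hQ : ∀ i, Q i = ∑ j, (D i j : ℂ) • P j)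
    (q : Fin d → Fin n → ℝ) (hq : ∀ j i, q j i = D i j / ∑ k, D i k)
    (B : Matrix (Fin d) (Fin d) ℝ) (hB : ∀ j m, B j m = ∑ i, D i m * q j i)
    (p : Fin d → ℝ) (hp : ∀ j, p j = ((ρ * P j).trace).re) :
    DoublyStochastic B ∧
    cgState ρ P = ∑ j, ((p j : ℝ) : ℂ) • P j ∧
    cgState ρ Q = ∑ j, (((∑ m, B j m * p m : ℝ)) : ℂ) • P j := by
  classical
  obtain ⟨hherm, horth, hsum1, hrank⟩ := hP
  -- trace of each projector is 1
  have htrP : ∀ j, (P j).trace = 1 := fun j =>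
    trace_one_of_rankone (P j) (hherm j) (by simpa using horth j j) (hrank j)
  -- Tr(ρ P j) is real and equals p j
  have htr : ∀ j, (ρ * P j).trace = ((p j : ℝ) : ℂ) := by
    intro j
    have hstar : (starRingEnd ℂ) ((ρ * P j).trace) = (ρ * P j).trace := by
      have : ((ρ * P j)ᴴ).trace = star ((ρ * P j).trace) := trace_conjTranspose _
      rw [conjTranspose_mul, hρ.1.eq, (hherm j).eq, trace_mul_comm] at this
      exact this.symm
    rw [hp j]
    exact (Complex.conj_eq_iff_re.mp hstar).symm
  -- positivity of row sums
  have hs : ∀ i, 0 < ∑ k, D i k := by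
    intro i
    obtain ⟨j, hj⟩ := hrow i
    exact Finset.sum_pos' (fun k _ => hD.1 i k)
      ⟨j, Finset.mem_univ j, lt_of_le_of_ne (hD.1 i j) (Ne.symm hj)⟩
  have hsne : ∀ i, (∑ k, D i k) ≠ 0 := fun i => (hs i).ne'
  refine ⟨⟨?_, ?_, ?_⟩, ?_, ?_⟩
  · -- nonnegativity
    intro j m
    rw [hB]
    exact Finset.sum_nonneg fun i _ =>
      mul_nonneg (hD.1 i m) (by rw [hq]; exact div_nonneg (hD.1 i j) (hs i).le)
  · -- row sums
    intro j
    simp only [hB]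
    rw [Finset.sum_comm]
    have : ∀ i : Fin n, ∑ m, D i m * q j i = D i j := by
      intro i
      rw [← Finset.sum_mul, hq, mul_div_cancel₀ _ (hsne i)]
    rw [Finset.sum_congr rfl fun i _ => this i]
    exact hD.2 j
  · -- column sums
    intro m
    simp only [hB]
    rw [Finset.sum_comm]
    have : ∀ i : Fin n, ∑ j, D i m * q j i = D i m := by
      intro i
      rw [← Finset.mul_sum]
      have : ∑ j, q j i = 1 := by
        simp only [hq, ← Finset.sum_div]
        exact div_self (hsne i)
      rw [this, mul_one]
    rw [Finset.sum_congr rfl fun i _ => this i]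
    exact hD.2 m
  · -- cgState ρ P
    unfold cgState
    refine Finset.sum_congr rfl fun j _ => ?_
    rw [htrP j, htr j, div_one]
  · -- cgState ρ Q
    have htrQ : ∀ i, (Q i).trace = ((∑ k, D i k : ℝ) : ℂ) := by
      intro i
      rw [hQ i, trace_sum]
      simp only [trace_smul, htrP, smul_eq_mul, mul_one]
      push_cast
      rfl
    have htrρQ : ∀ i, (ρ * Q i).trace = ((∑ m, D i m * p m : ℝ) : ℂ) := by
      intro i
      rw [hQ i, Finset.mul_sum]
      simp only [mul_smul_comm, trace_sum, trace_smul, htr, smul_eq_mul]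
      push_cast
      rfl
    unfold cgState
    have step : ∀ i : Fin n, (((ρ * Q i).trace) / ((Q i).trace)) • Q i =
        ∑ j, ((((∑ m, D i m * p m) / (∑ k, D i k) * D i j : ℝ)) : ℂ) • P j := by
      intro i
      rw [htrQ i, htrρQ i, hQ i, Finset.smul_sum]
      refine Finset.sum_congr rfl fun j _ => ?_
      rw [smul_smul]
      congr 1
      push_cast
      ring
    rw [Finset.sum_congr rfl fun i _ => step i, Finset.sum_comm]
    refine Finset.sum_congr rfl fun j _ => ?_
    rw [← Finset.sum_smul]
    congr 1
    rw [← Complex.ofReal_sum]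
    congr 1
    -- real identity
    have key : ∀ m, ∑ i, D i m * q j i * p m
        = ∑ i, D i m * (D i j / (∑ k, D i k)) * p m := by
      intro m
      exact Finset.sum_congr rfl fun i _ => by rw [hq]
    calc ∑ i, (∑ m, D i m * p m) / (∑ k, D i k) * D i j
        = ∑ i, ∑ m, D i m * (D i j / (∑ k, D i k)) * p m := by
          refine Finset.sum_congr rfl fun i _ => ?_
          have h5 : ∀ m : Fin d, D i m * (D i j / (∑ k, D i k)) * p m
              = D i m * p m * (D i j / (∑ k, D i k)) := fun m => by ring
          rw [Finset.sum_congr rfl fun m _ => h5 m, ← Finset.sum_mul]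
          ring
      _ = ∑ m, (∑ i, D i m * q j i) * p m := by
          rw [Finset.sum_comm]
          refine Finset.sum_congr rfl fun m _ => ?_
          rw [Finset.sum_mul, key m]
      _ = ∑ m, B j m * p m := by
          refine Finset.sum_congr rfl fun m _ => ?_
          rw [hB]
end
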